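/- arXiv:2305.02987 — 11 statements merged into one kernel-verified Lean document; each statement's English description precedes it below -/
import Mathlib

section
/- Let f : 2^V → ℝ≥0 be a monotone non-negative submodular set function, and suppose S₁, S₂ ⊊ V are both minimizers of the ratio (|V| - |S|)/(f(V) - f(S)) with minimum value λ. Then S₁ ∩ S₂ is also a minimizer, i.e., (|V| - |S₁ ∩ S₂|)/(f(V) - f(S₁ ∩ S₂)) = λ. -/
open Finset

/-- For a monotone non-negative submodular function, the intersection of two
minimizers of `(|V|-|S|)/(f(V)-f(S))` is also a minimizer. -/
theorem stmt4 {V : Type*} [Fintype V] [DecidableEq V]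
    (f : Finset V → ℝ) (hnn : ∀ S : Finset V, 0 ≤ f S)
    (hmono : ∀ A B : Finset V, A ⊆ B → f A ≤ f B)
    (hsub : ∀ A B : Finset V, f (A ∪ B) + f (A ∩ B) ≤ f A + f B)
    (hwd : ∀ S : Finset V, S ⊂ univ → 0 < f univ - f S)
    (lam : ℝ)
    (S₁ S₂ : Finset V) (h1 : S₁ ⊂ univ) (h2 : S₂ ⊂ univ)
    (hmin : ∀ T : Finset V, T ⊂ univ →
      lam ≤ (((univ : Finset V).card : ℝ) - T.card) / (f univ - f T))
    (hd1 : (((univ : Finset V).card : ℝ) - S₁.card) / (f univ - f S₁) = lam)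
    (hd2 : (((univ : Finset V).card : ℝ) - S₂.card) / (f univ - f S₂) = lam) :
    (((univ : Finset V).card : ℝ) - (S₁ ∩ S₂).card) / (f univ - f (S₁ ∩ S₂)) = lam := by
  have d1 := hwd S₁ h1
  have d2 := hwd S₂ h2
  have hI : S₁ ∩ S₂ ⊂ univ := lt_of_le_of_lt inter_subset_left h1
  have dI := hwd _ hI
  have e1 : (((univ : Finset V).card : ℝ) - S₁.card) = lam * (f univ - f S₁) := by
    rw [div_eq_iff (ne_of_gt d1)] at hd1; exact hd1
  have e2 : (((univ : Finset V).card : ℝ) - S₂.card) = lam * (f univ - f S₂) := by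
    rw [div_eq_iff (ne_of_gt d2)] at hd2; exact hd2
  have hlam0 : 0 ≤ lam := by
    rw [← hd1]
    apply div_nonneg _ (le_of_lt d1)
    have := card_le_card h1.subset
    have : (S₁.card : ℝ) ≤ (univ : Finset V).card := by exact_mod_cast this
    linarith
  have hunion : lam * (f univ - f (S₁ ∪ S₂)) ≤
      (((univ : Finset V).card : ℝ) - (S₁ ∪ S₂).card) := by
    by_cases hU : S₁ ∪ S₂ = univ
    · rw [hU]; simp
    · have hUs : S₁ ∪ S₂ ⊂ univ := (subset_univ _).ssubset_of_ne hU
      have dU := hwd _ hUs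
      have := hmin _ hUs
      rw [le_div_iff₀ dU] at this
      linarith
  have hge : lam * (f univ - f (S₁ ∩ S₂)) ≤
      (((univ : Finset V).card : ℝ) - (S₁ ∩ S₂).card) := by
    have := hmin _ hI
    rw [le_div_iff₀ dI] at this
    linarith
  have hcard : ((S₁ ∪ S₂).card : ℝ) + (S₁ ∩ S₂).card = S₁.card + S₂.card := by
    exact_mod_cast card_union_add_card_inter S₁ S₂
  have hp : lam * (f (S₁ ∪ S₂) + f (S₁ ∩ S₂)) ≤ lam * (f S₁ + f S₂) :=
    mul_le_mul_of_nonneg_left (hsub S₁ S₂) hlam0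
  rw [div_eq_iff (ne_of_gt dI)]
  nlinarith [hp, hunion, hge, e1, e2, hcard]
end

section
/- Let D ⊆ ℝ^d be a compact convex set and f : D → ℝ a convex differentiable function with curvature constant C_f and minimizer b*. Consider the noisy Frank-Wolfe iteration: b^{(k+1)} = (1 - γ_k) b^{(k)} + γ_k d^{(k+1)} with step size γ_k = 1/(k+1), where d^{(k+1)} ∈ D satisfies ⟨d^{(k+1)}, ∇f(b^{(k)})⟩ ≤ min_{s ∈ D} ⟨s, ∇f(b^{(k)})⟩ + δ C_f/(k+2) for a fixed δ > 0. Then for all k ≥ 1, f(b^{(k)}) - f(b*) ≤ 2 C_f (1 + δ) H_{k+1}/(k+1), where H_n = Σ_{i=1}^n 1/i. -/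
open Filter Set Topology

/-- First-order condition for a convex differentiable function. -/
lemma fw_grad_lower {E : Type*} [NormedAddCommGroup E] [InnerProductSpace ℝ E] [CompleteSpace E]
    {D : Set E} {f : E → ℝ} {g x y : E} (hconv : ConvexOn ℝ D f)
    (hx : x ∈ D) (hy : y ∈ D) (hg : HasGradientAt f g x) :
    (inner ℝ (y - x) g : ℝ) ≤ f y - f x := by
  set φ : ℝ → E := fun t => x + t • (y - x) with hφ
  have hφd : HasDerivAt φ (y - x) 0 := by
    simpa [hφ] using ((hasDerivAt_id (0 : ℝ)).smul_const (y - x)).const_add x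
  have h0 : φ 0 = x := by simp [hφ]
  have hfdF : HasFDerivAt f (InnerProductSpace.toDual ℝ E g : E →L[ℝ] ℝ) (φ 0) := by
    rw [h0]; exact hasGradientAt_iff_hasFDerivAt.mp hg
  have hfd : HasDerivAt (f ∘ φ) ((InnerProductSpace.toDual ℝ E g) (y - x)) 0 :=
    hfdF.comp_hasDerivAt 0 hφd
  have hval : (InnerProductSpace.toDual ℝ E g) (y - x) = (inner ℝ (y - x) g : ℝ) := by
    rw [InnerProductSpace.toDual_apply_apply, real_inner_comm]
  rw [hval] at hfd
  have hslope := hasDerivAt_iff_tendsto_slope.mp hfd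
  have hmono : 𝓝[Ioo (0:ℝ) 1] 0 ≤ 𝓝[≠] 0 := by
    apply nhdsWithin_mono
    intro t ht
    exact ne_of_gt ht.1
  have hNB : (𝓝[Ioo (0:ℝ) 1] 0).NeBot := by
    apply mem_closure_iff_nhdsWithin_neBot.mp
    rw [closure_Ioo (by norm_num : (0:ℝ) ≠ 1)]
    exact ⟨le_refl 0, by norm_num⟩
  refine le_of_tendsto (hslope.mono_left hmono) ?_
  filter_upwards [self_mem_nhdsWithin] with t ht
  have ht0 : 0 < t := ht.1
  have ht1 : t ≤ 1 := le_of_lt ht.2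
  have hφt : φ t = (1 - t) • x + t • y := by simp only [hφ]; module
  have hcv : f (φ t) ≤ (1 - t) * f x + t * f y := by
    rw [hφt]
    exact hconv.2 hx hy (by linarith) ht0.le (by ring)
  rw [slope_def_field]
  simp only [Function.comp_apply, h0, sub_zero]
  rw [div_le_iff₀ ht0]
  nlinarith [hcv]

lemma fw_arith (K h H C δ : ℝ) (hK : 1 ≤ K) (hC : 0 ≤ C) (hδ : 0 < δ) (hH : 0 ≤ H)
    (hh0 : 0 ≤ h) (hIH : h ≤ 2*C*(1+δ)*H/(K+1)) :
    h + (1/(K+1))*((-h) + δ*C/(K+2)) + C/(2*(K+1)^2)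
      ≤ 2*C*(1+δ)*(H + 1/(K+2))/(K+2) := by
  have hK1 : (0:ℝ) < K+1 := by linarith
  have hK2 : (0:ℝ) < K+2 := by linarith
  have hIH' : h*(K+1) ≤ 2*C*(1+δ)*H := by rwa [← le_div_iff₀ hK1]
  have t1 : h*K/(K+1) ≤ 2*C*(1+δ)*H/(K+2) := by
    rw [div_le_div_iff₀ hK1 hK2]
    nlinarith [mul_le_mul_of_nonneg_right hIH' hK1.le, hh0]
  have t2 : δ*C/((K+1)*(K+2)) ≤ 2*(δ*C)/(K+2)^2 := by
    rw [div_le_div_iff₀ (by positivity) (by positivity)]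
    nlinarith [mul_nonneg (mul_nonneg hδ.le hC) hK2.le]
  have t3 : C/(2*(K+1)^2) ≤ 2*C/(K+2)^2 := by
    rw [div_le_div_iff₀ (by positivity) (by positivity)]
    nlinarith [hC, mul_nonneg hC (by linarith : (0:ℝ) ≤ K)]
  calc h + (1/(K+1))*((-h) + δ*C/(K+2)) + C/(2*(K+1)^2)
      = h*K/(K+1) + δ*C/((K+1)*(K+2)) + C/(2*(K+1)^2) := by field_simp; ring
    _ ≤ 2*C*(1+δ)*H/(K+2) + 2*(δ*C)/(K+2)^2 + 2*C/(K+2)^2 :=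
        add_le_add (add_le_add t1 t2) t3
    _ = 2*C*(1+δ)*(H + 1/(K+2))/(K+2) := by field_simp; ring

open Finset

/-- Convergence of the noisy Frank-Wolfe method with step size `1/(k+1)` and a
`δ C_f/(k+2)`-approximate linear minimization oracle. -/
theorem stmt5 {d : ℕ} (D : Set (EuclideanSpace ℝ (Fin d)))
    (hDc : IsCompact D) (hDconv : Convex ℝ D)
    (f : EuclideanSpace ℝ (Fin d) → ℝ)
    (f' : EuclideanSpace ℝ (Fin d) → EuclideanSpace ℝ (Fin d))
    (hconv : ConvexOn ℝ D f)
    (hgrad : ∀ x ∈ D, HasGradientAt f (f' x) x)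
    (C : ℝ)
    -- `C` is the curvature constant of `f` on `D`
    (hC : ∀ x ∈ D, ∀ s ∈ D, ∀ γ : ℝ, 0 < γ → γ ≤ 1 →
      (2 / γ ^ 2) * (f (x + γ • (s - x)) - f x -
        (inner ℝ (γ • (s - x)) (f' x) : ℝ)) ≤ C)
    (bstar : EuclideanSpace ℝ (Fin d)) (hbstar : bstar ∈ D)
    (hmin : ∀ x ∈ D, f bstar ≤ f x)
    (δ : ℝ) (hδ : 0 < δ)
    (b dir : ℕ → EuclideanSpace ℝ (Fin d))
    (hb0 : b 0 ∈ D)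
    (hdir : ∀ k : ℕ, dir (k + 1) ∈ D)
    -- approximate linear minimization oracle
    (happrox : ∀ k : ℕ, ∀ s ∈ D,
      (inner ℝ (dir (k + 1)) (f' (b k)) : ℝ) ≤
        (inner ℝ s (f' (b k)) : ℝ) + δ * C / (k + 2))
    -- Frank-Wolfe update with step size `γ_k = 1/(k+1)`
    (hupd : ∀ k : ℕ,
      b (k + 1) = (1 - 1 / ((k : ℝ) + 1)) • b k + (1 / ((k : ℝ) + 1)) • dir (k + 1)) :
    ∀ k : ℕ, 1 ≤ k →
      f (b k) - f bstar ≤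
        2 * C * (1 + δ) * (∑ i ∈ Finset.range (k + 1), (1 : ℝ) / (i + 1)) / (k + 1) := by
  have hC0 : 0 ≤ C := by
    have := hC bstar hbstar bstar hbstar 1 one_pos le_rfl
    simpa using this
  have hbD : ∀ k, b k ∈ D := by
    intro k
    induction k with
    | zero => exact hb0
    | succ k ih =>
      rw [hupd k]
      have hk1 : (0:ℝ) < (k:ℝ) + 1 := by positivity
      have h1 : (1:ℝ)/((k:ℝ)+1) ≤ 1 := by rw [div_le_one hk1]; linarith
      exact hDconv ih (hdir k) (by linarith) (by positivity) (by ring)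
  have hrec : ∀ k : ℕ, f (b (k+1)) ≤ f (b k) +
      (1/((k:ℝ)+1)) * ((f bstar - f (b k)) + δ*C/((k:ℝ)+2)) + C/(2*((k:ℝ)+1)^2) := by
    intro k
    have hk1 : (0:ℝ) < (k:ℝ) + 1 := by positivity
    set γ : ℝ := 1/((k:ℝ)+1) with hγdef
    have hγpos : 0 < γ := by positivity
    have hγle : γ ≤ 1 := by rw [hγdef, div_le_one hk1]; linarith
    have hcur := hC (b k) (hbD k) (dir (k+1)) (hdir k) γ hγpos hγle
    have heq : b k + γ • (dir (k+1) - b k) = b (k+1) := by rw [hupd k]; module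
    rw [heq, real_inner_smul_left] at hcur
    have hcur' : f (b (k+1)) - f (b k) - γ * inner ℝ (dir (k+1) - b k) (f' (b k)) ≤ C*γ^2/2 := by
      have h2 := mul_le_mul_of_nonneg_left hcur (show (0:ℝ) ≤ γ^2/2 by positivity)
      calc f (b (k+1)) - f (b k) - γ * inner ℝ (dir (k+1) - b k) (f' (b k))
          = γ^2/2 * ((2/γ^2) * (f (b (k+1)) - f (b k) -
              γ * inner ℝ (dir (k+1) - b k) (f' (b k)))) := by
            field_simp
        _ ≤ γ^2/2 * C := h2
        _ = C*γ^2/2 := by ring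
    have hfo : (inner ℝ (bstar - b k) (f' (b k)) : ℝ) ≤ f bstar - f (b k) :=
      fw_grad_lower hconv (hbD k) hbstar (hgrad (b k) (hbD k))
    have hor := happrox k bstar hbstar
    have hlin : (inner ℝ (dir (k+1) - b k) (f' (b k)) : ℝ) ≤
        (f bstar - f (b k)) + δ*C/((k:ℝ)+2) := by
      rw [inner_sub_left] at hfo ⊢
      linarith [hor, hfo]
    have hmul := mul_le_mul_of_nonneg_left hlin hγpos.le
    have hγsq : C*γ^2/2 = C/(2*((k:ℝ)+1)^2) := by rw [hγdef, div_pow, one_pow, mul_one_div, div_div, mul_comm (((k:ℝ)+1)^2) 2]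
    linarith [hcur', hmul, hγsq.le, hγsq.ge]
  intro k hk
  induction k, hk using Nat.le_induction with
  | base =>
    have h0 := hrec 0
    norm_num at h0
    simp only [Finset.sum_range_succ, Finset.sum_range_one]
    norm_num
    nlinarith [mul_nonneg hC0 hδ.le, h0]
  | succ k hk ih =>
    have hH : (0:ℝ) ≤ ∑ i ∈ Finset.range (k+1), (1:ℝ)/(i+1) :=
      Finset.sum_nonneg fun i _ => by positivity
    have hh0 : (0:ℝ) ≤ f (b k) - f bstar := sub_nonneg.mpr (hmin _ (hbD k))
    have harith := fw_arith (k:ℝ) (f (b k) - f bstar)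
      (∑ i ∈ Finset.range (k+1), (1:ℝ)/(i+1)) C δ
      (by exact_mod_cast hk) hC0 hδ hH hh0 ih
    rw [Finset.sum_range_succ]
    push_cast
    have e : ((k:ℝ)+1+1) = (k:ℝ)+2 := by ring
    rw [e]
    linarith [hrec k, harith]
end

section
/- Let D ⊆ ℝ^d be compact convex and f : D → ℝ convex and differentiable such that ∇f is Lipschitz with constant L. Then the curvature constant C_f satisfies C_f ≤ L · diam(D)², where diam(D) = max_{x,y ∈ D} ‖x - y‖₂. -/
open InnerProductSpace Set

/-- Descent lemma along a segment: auxiliary. -/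
lemma stmt6_aux {d : ℕ} (D : Set (EuclideanSpace ℝ (Fin d)))
    (hDconv : Convex ℝ D)
    (f : EuclideanSpace ℝ (Fin d) → ℝ)
    (f' : EuclideanSpace ℝ (Fin d) → EuclideanSpace ℝ (Fin d))
    (hgrad : ∀ x ∈ D, HasGradientAt f (f' x) x)
    (L : ℝ)
    (hL : ∀ x ∈ D, ∀ y ∈ D, ‖f' x - f' y‖ ≤ L * ‖x - y‖)
    (x : EuclideanSpace ℝ (Fin d)) (hx : x ∈ D)
    (s : EuclideanSpace ℝ (Fin d)) (hs : s ∈ D)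
    (γ : ℝ) (hγ0 : 0 < γ) (hγ1 : γ ≤ 1) :
    f (x + γ • (s - x)) - f x - γ * (inner ℝ (s - x) (f' x) : ℝ)
      ≤ L * ‖s - x‖ ^ 2 * γ ^ 2 / 2 := by
  set v := s - x with hv
  -- membership of the segment in D
  have hmem : ∀ u : ℝ, 0 ≤ u → u ≤ γ → x + u • v ∈ D := by
    intro u hu0 huγ
    have h1 : u ≤ 1 := huγ.trans hγ1
    have := hDconv hx hs (by linarith : (0:ℝ) ≤ 1 - u) hu0 (by ring)
    convert this using 1
    simp only [hv]
    module
  -- the function g and its bound B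
  set g : ℝ → ℝ := fun u => f (x + u • v) - f x - u * (inner ℝ v (f' x) : ℝ) with hg
  set B : ℝ → ℝ := fun u => L * ‖v‖ ^ 2 * u ^ 2 / 2 with hB
  set g' : ℝ → ℝ := fun u => (inner ℝ (f' (x + u • v)) v : ℝ) - (inner ℝ v (f' x) : ℝ) with hg'
  set B' : ℝ → ℝ := fun u => L * ‖v‖ ^ 2 * u with hB'
  have hgderiv : ∀ u ∈ Icc (0:ℝ) γ, HasDerivAt g (g' u) u := by
    intro u hu
    have hp : x + u • v ∈ D := hmem u hu.1 hu.2
    have h1 : HasDerivAt (fun u : ℝ => x + u • v) v u := by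
      simpa using ((hasDerivAt_id u).smul_const v).const_add x
    have h2 : HasFDerivAt f (toDual ℝ _ (f' (x + u • v))) (x + u • v) :=
      (hgrad _ hp).hasFDerivAt
    have h3 : HasDerivAt (fun u : ℝ => f (x + u • v))
        ((inner ℝ (f' (x + u • v)) v : ℝ)) u := by
      simpa [Function.comp_def] using h2.comp_hasDerivAt u h1
    have h4 : HasDerivAt (fun u : ℝ => f x + u * (inner ℝ v (f' x) : ℝ))
        ((inner ℝ v (f' x) : ℝ)) u := by
      simpa using ((hasDerivAt_id u).mul_const ((inner ℝ v (f' x) : ℝ))).const_add (f x)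
    have := h3.sub h4
    simpa [hg, hg', sub_sub, Pi.sub_def] using this
  have hBderiv : ∀ u : ℝ, HasDerivAt B (B' u) u := by
    intro u
    have : HasDerivAt (fun u : ℝ => L * ‖v‖ ^ 2 * u ^ 2 / 2)
        (L * ‖v‖ ^ 2 * (2 * u) / 2) u := by
      exact (((hasDerivAt_pow 2 u).const_mul (L * ‖v‖ ^ 2)).div_const 2).congr_deriv (by ring)
    simpa [hB, hB'] using this.congr_deriv (by ring)
  have hbound : ∀ u ∈ Ico (0:ℝ) γ, g' u ≤ B' u := by
    intro u hu
    have hp : x + u • v ∈ D := hmem u hu.1 hu.2.le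
    have h1 : (inner ℝ (f' (x + u • v) - f' x) v : ℝ) ≤ ‖f' (x + u • v) - f' x‖ * ‖v‖ :=
      real_inner_le_norm _ _
    have h2 : ‖f' (x + u • v) - f' x‖ ≤ L * ‖u • v‖ := by
      simpa using hL _ hp _ hx
    have h3 : ‖u • v‖ = u * ‖v‖ := by
      rw [norm_smul, Real.norm_eq_abs, abs_of_nonneg hu.1]
    have h4 : (inner ℝ (f' (x + u • v) - f' x) v : ℝ)
        = (inner ℝ (f' (x + u • v)) v : ℝ) - (inner ℝ v (f' x) : ℝ) := by
      rw [inner_sub_left, real_inner_comm v (f' x)]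
    have h5 : ‖f' (x + u • v) - f' x‖ * ‖v‖ ≤ (L * (u * ‖v‖)) * ‖v‖ := by
      apply mul_le_mul_of_nonneg_right _ (norm_nonneg v)
      rw [← h3]; exact h2
    simp only [hg', hB']
    calc (inner ℝ (f' (x + u • v)) v : ℝ) - (inner ℝ v (f' x) : ℝ)
        = (inner ℝ (f' (x + u • v) - f' x) v : ℝ) := h4.symm
      _ ≤ ‖f' (x + u • v) - f' x‖ * ‖v‖ := h1
      _ ≤ (L * (u * ‖v‖)) * ‖v‖ := h5
      _ = L * ‖v‖ ^ 2 * u := by ring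
  have hcont : ContinuousOn g (Icc 0 γ) := fun u hu => (hgderiv u hu).continuousAt.continuousWithinAt
  have hmain : ∀ ⦃u⦄, u ∈ Icc (0:ℝ) γ → g u ≤ B u := by
    refine image_le_of_deriv_right_le_deriv_boundary hcont
      (fun u hu => (hgderiv u ⟨hu.1, hu.2.le⟩).hasDerivWithinAt) ?_
      (fun u _ => (hBderiv u).continuousAt.continuousWithinAt)
      (fun u _ => (hBderiv u).hasDerivWithinAt) ?_
    · simp [hg, hB]
    · intro u hu; exact hbound u hu
  have := hmain (right_mem_Icc.2 hγ0.le)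
  simpa [hg, hB, mul_comm] using this

/-- The curvature constant is bounded by `L · diam(D)²` when the gradient of
`f` is `L`-Lipschitz on `D`. -/
theorem stmt6 {d : ℕ} (D : Set (EuclideanSpace ℝ (Fin d)))
    (hDc : IsCompact D) (hDconv : Convex ℝ D)
    (f : EuclideanSpace ℝ (Fin d) → ℝ)
    (f' : EuclideanSpace ℝ (Fin d) → EuclideanSpace ℝ (Fin d))
    (hconv : ConvexOn ℝ D f)
    (hgrad : ∀ x ∈ D, HasGradientAt f (f' x) x)
    (L : ℝ)
    (hL : ∀ x ∈ D, ∀ y ∈ D, ‖f' x - f' y‖ ≤ L * ‖x - y‖) :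
    ∀ x ∈ D, ∀ s ∈ D, ∀ γ : ℝ, 0 < γ → γ ≤ 1 →
      (2 / γ ^ 2) * (f (x + γ • (s - x)) - f x -
        (inner ℝ (γ • (s - x)) (f' x) : ℝ)) ≤ L * (Metric.diam D) ^ 2 := by
  intro x hx s hs γ hγ0 hγ1
  have key := stmt6_aux D hDconv f f' hgrad L hL x hx s hs γ hγ0 hγ1
  have hinner : (inner ℝ (γ • (s - x)) (f' x) : ℝ) = γ * (inner ℝ (s - x) (f' x) : ℝ) := by
    rw [real_inner_smul_left]
  rw [hinner]
  have hγ2 : (0:ℝ) < γ ^ 2 := by positivity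
  have step1 : (2 / γ ^ 2) * (f (x + γ • (s - x)) - f x - γ * (inner ℝ (s - x) (f' x) : ℝ))
      ≤ L * ‖s - x‖ ^ 2 := by
    rw [div_mul_eq_mul_div, div_le_iff₀ hγ2]
    calc 2 * (f (x + γ • (s - x)) - f x - γ * (inner ℝ (s - x) (f' x) : ℝ))
        ≤ 2 * (L * ‖s - x‖ ^ 2 * γ ^ 2 / 2) := by linarith
      _ = L * ‖s - x‖ ^ 2 * γ ^ 2 := by ring
  refine step1.trans ?_
  by_cases hL0 : 0 ≤ L
  · apply mul_le_mul_of_nonneg_left _ hL0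
    have h1 : ‖s - x‖ = dist s x := by rw [dist_eq_norm]
    have h2 : dist s x ≤ Metric.diam D := Metric.dist_le_diam_of_mem hDc.isBounded hs hx
    have h3 : (0:ℝ) ≤ ‖s - x‖ := norm_nonneg _
    calc ‖s - x‖ ^ 2 ≤ (Metric.diam D) ^ 2 := by
          apply pow_le_pow_left₀ h3 (h1 ▸ h2)
      _ = _ := rfl
  · -- L < 0 forces D to be a subsingleton
    push_neg at hL0
    have hsx : s = x := by
      by_contra hne
      have h0 : (0:ℝ) < ‖s - x‖ := by
        simp only [norm_pos_iff, sub_ne_zero]; exact hne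
      have := hL s hs x hx
      nlinarith [norm_nonneg (f' s - f' x)]
    have hdiam : Metric.diam D = 0 := by
      apply le_antisymm _ Metric.diam_nonneg
      apply Metric.diam_le_of_forall_dist_le le_rfl
      intro a ha b hb
      by_contra hgt
      push_neg at hgt
      have h0 : (0:ℝ) < ‖a - b‖ := by rw [← dist_eq_norm]; linarith [dist_nonneg (x := a) (y := b)]
      have := hL a ha b hb
      nlinarith [norm_nonneg (f' a - f' b)]
    rw [hsx, hdiam]
    simp
end

section
/- Suppose a sequence of nonnegative reals ε_k satisfies ε_{k+1} ≤ (1 - 1/(k+1)) ε_k + C/(k+1)² for all k ≥ 0, for some constant C > 0. Then ε_k ≤ 4 C H_{k+1}/(k+1) for all k ≥ 1, where H_n is the n-th harmonic number. -/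
/-- The Frank-Wolfe error recurrence `ε_{k+1} ≤ (1 - 1/(k+1)) ε_k + C/(k+1)²`
implies `ε_k ≤ 4 C H_{k+1}/(k+1)` for `k ≥ 1`. -/
theorem stmt7 (ε : ℕ → ℝ) (hnn : ∀ k, 0 ≤ ε k)
    (C : ℝ) (hC : 0 < C)
    (hrec : ∀ k : ℕ, ε (k + 1) ≤ (1 - 1 / ((k : ℝ) + 1)) * ε k + C / ((k : ℝ) + 1) ^ 2) :
    ∀ k : ℕ, 1 ≤ k →
      ε k ≤ 4 * C * (∑ i ∈ Finset.range (k + 1), (1 : ℝ) / (i + 1)) / (k + 1) := by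
  intro k hk
  induction k, hk using Nat.le_induction with
  | base =>
    have h0 := hrec 0
    norm_num at h0
    have : (∑ i ∈ Finset.range 2, (1 : ℝ) / (i + 1)) = 3 / 2 := by
      simp [Finset.sum_range_succ]; norm_num
    rw [this]
    push_cast
    nlinarith [h0]
  | succ k hk ih =>
    set n : ℝ := (k : ℝ) with hn
    have hn0 : (0 : ℝ) ≤ n := Nat.cast_nonneg k
    have hn1 : (0 : ℝ) < n + 1 := by linarith
    have hn2 : (0 : ℝ) < n + 2 := by linarith
    have hH : (0 : ℝ) ≤ ∑ i ∈ Finset.range (k + 1), (1 : ℝ) / (i + 1) :=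
      Finset.sum_nonneg fun i _ => by positivity
    set H : ℝ := ∑ i ∈ Finset.range (k + 1), (1 : ℝ) / (i + 1) with hHdef
    have hsum : (∑ i ∈ Finset.range (k + 1 + 1), (1 : ℝ) / (i + 1)) = H + 1 / (n + 2) := by
      rw [Finset.sum_range_succ]
      push_cast
      ring
    rw [hsum]
    have hrk := hrec k
    have hcoef : (0 : ℝ) ≤ 1 - 1 / (n + 1) := by
      rw [sub_nonneg, div_le_one hn1]; linarith
    have hstep : ε (k + 1) ≤ (1 - 1 / (n + 1)) * (4 * C * H / (n + 1)) + C / (n + 1) ^ 2 := by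
      calc ε (k + 1) ≤ (1 - 1 / (n + 1)) * ε k + C / (n + 1) ^ 2 := hrk
        _ ≤ (1 - 1 / (n + 1)) * (4 * C * H / (n + 1)) + C / (n + 1) ^ 2 := by
            gcongr
    have key : (1 - 1 / (n + 1)) * (4 * C * H / (n + 1)) + C / (n + 1) ^ 2
        ≤ 4 * C * (H + 1 / (n + 2)) / (n + 1 + 1) := by
      have lhs_eq : (1 - 1 / (n + 1)) * (4 * C * H / (n + 1)) + C / (n + 1) ^ 2
          = (4 * C * H * n + C) / (n + 1) ^ 2 := by
        field_simp
        ring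
      have rhs_eq : 4 * C * (H + 1 / (n + 2)) / (n + 1 + 1)
          = (4 * C * H * (n + 2) + 4 * C) / (n + 2) ^ 2 := by
        field_simp
        ring
      rw [lhs_eq, rhs_eq, div_le_div_iff₀ (by positivity) (by positivity)]
      nlinarith [mul_nonneg (mul_nonneg hC.le hH) hn0, mul_nonneg hC.le hH,
        mul_nonneg (mul_nonneg hC.le hn0) hn0, mul_nonneg hC.le hn0,
        mul_nonneg (mul_nonneg (mul_nonneg hC.le hH) hn0) hn0]
    have : (↑(k + 1) : ℝ) + 1 = n + 2 := by push_cast; ring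
    rw [this]
    calc ε (k + 1) ≤ _ := hstep
      _ ≤ 4 * C * (H + 1 / (n + 2)) / (n + 1 + 1) := key
      _ = 4 * C * (H + 1 / (n + 2)) / (n + 2) := by ring_nf
end

section
/- Let f : 2^V → ℝ≥0 be a normalized monotone supermodular function and let w ∈ ℝ^V. Sort V = {s₁, ..., sₙ} in ascending order of w, let A_i = {s_i, ..., s_n} with A_{n+1} = ∅, and define s*_i = f(A_i) - f(A_{i+1}). Then s* lies in the contrapolymatroid base polytope B_f = {x ∈ ℝ^V : x ≥ 0, x(S) ≥ f(S) for all S, x(V) = f(V)} and minimizes ⟨s, w⟩ over B_f. -/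
open Finset

lemma abel_aux (n : ℕ) (W D : ℕ → ℝ)
    (hW : ∀ i, i + 1 < n → W i ≤ W (i + 1))
    (hD : ∀ i, 0 ≤ D i) (hD0 : D 0 = 0) (hDn : D n = 0) :
    0 ≤ ∑ i ∈ Finset.range n, W i * (D i - D (i + 1)) := by
  rcases Nat.eq_zero_or_pos n with h | h
  · simp [h]
  have key : ∀ m, 1 ≤ m → m ≤ n →
      W 0 * D 0 - W (m - 1) * D m ≤ ∑ i ∈ Finset.range m, W i * (D i - D (i + 1)) := by
    intro m hm
    induction m, hm using Nat.le_induction with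
    | base =>
      intro _
      rw [Finset.sum_range_one]
      ring_nf
      exact le_rfl
    | succ m hm ih =>
      intro hmn
      rw [Finset.sum_range_succ]
      have h1 : W (m - 1) ≤ W m := by
        have h2 := hW (m - 1) (by omega)
        rwa [show m - 1 + 1 = m from by omega] at h2
      have h3 := mul_le_mul_of_nonneg_right h1 (hD m)
      have h4 := ih (by omega)
      have h5 : (m + 1) - 1 = m := by omega
      rw [h5]
      nlinarith
  have := key n (by omega) le_rfl
  rw [hD0, hDn] at this
  simpa using this

/-- Edmonds' greedy theorem for contrapolymatroids: sorting the ground set in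
ascending order of `w` and taking suffix marginals yields a base minimizing
`⟨s, w⟩` over the contrapolymatroid base polytope. -/
theorem stmt11 {V : Type*} [Fintype V] [DecidableEq V] {n : ℕ}
    (hn : Fintype.card V = n)
    (f : Finset V → ℝ) (hnorm : f ∅ = 0)
    (hmono : ∀ A B : Finset V, A ⊆ B → f A ≤ f B)
    (hsup : ∀ A B : Finset V, f A + f B ≤ f (A ∪ B) + f (A ∩ B))
    (w : V → ℝ) (σ : Fin n ≃ V)
    -- `σ` enumerates `V` in ascending order of `w`
    (hsort : ∀ i j : Fin n, i ≤ j → w (σ i) ≤ w (σ j)) :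
    -- `A i = {s_i, ..., s_n}` is the suffix starting at position `i`
    let A : ℕ → Finset V := fun i => (Finset.univ.filter fun j : Fin n => i ≤ (j : ℕ)).image σ
    let sstar : V → ℝ := fun v => f (A (σ.symm v)) - f (A ((σ.symm v : ℕ) + 1))
    ((∀ v : V, 0 ≤ sstar v) ∧ (∀ S : Finset V, f S ≤ ∑ v ∈ S, sstar v) ∧
        (∑ v, sstar v = f univ)) ∧
      ∀ x : V → ℝ, (∀ v : V, 0 ≤ x v) → (∀ S : Finset V, f S ≤ ∑ v ∈ S, x v) →
        (∑ v, x v = f univ) →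
        ∑ v, sstar v * w v ≤ ∑ v, x v * w v := by
  intro A sstar
  -- membership characterization
  have memA : ∀ (i : ℕ) (v : V), v ∈ A i ↔ i ≤ (σ.symm v : ℕ) := by
    intro i v
    simp only [A, Finset.mem_image, Finset.mem_filter, Finset.mem_univ, true_and]
    constructor
    · rintro ⟨j, hj, rfl⟩; simpa using hj
    · intro h; exact ⟨σ.symm v, h, by simp⟩
  have hve : ∀ (v : V) (j : Fin n), v = σ j ↔ (σ.symm v : ℕ) = (j : ℕ) := by
    intro v j
    constructor
    · rintro rfl; simp
    · intro h
      have : σ.symm v = j := Fin.ext h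
      rw [← this, Equiv.apply_symm_apply]
  have A0 : A 0 = univ := by
    ext v; simp [memA]
  have hAempty : ∀ i, n ≤ i → A i = ∅ := by
    intro i hi
    ext v
    simp only [memA, Finset.notMem_empty, iff_false]
    have := (σ.symm v).isLt
    omega
  have hsub : ∀ i j : ℕ, i ≤ j → A j ⊆ A i := by
    intro i j hij v hv
    rw [memA] at hv ⊢
    omega
  have insertA : ∀ j : Fin n, A (j : ℕ) = insert (σ j) (A ((j : ℕ) + 1)) := by
    intro j
    ext v
    simp only [memA, Finset.mem_insert, hve]
    omega
  have notmem : ∀ j : Fin n, σ j ∉ A ((j : ℕ) + 1) := by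
    intro j
    rw [memA]
    simp
  have sstar_sigma : ∀ j : Fin n, sstar (σ j) = f (A (j : ℕ)) - f (A ((j : ℕ) + 1)) := by
    intro j
    simp only [sstar, Equiv.symm_apply_apply]
  -- nonnegativity
  have hnonneg : ∀ v : V, 0 ≤ sstar v := by
    intro v
    have := hmono (A ((σ.symm v : ℕ) + 1)) (A (σ.symm v)) (hsub _ _ (Nat.le_succ _))
    simp only [sstar]
    linarith
  -- partial sums of sstar telescope
  have sumA : ∀ k i : ℕ, n ≤ i + k → ∑ v ∈ A i, sstar v = f (A i) := by
    intro k
    induction k with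
    | zero =>
      intro i hi
      rw [hAempty i (by omega)]
      simp [hnorm]
    | succ k ih =>
      intro i hi
      rcases le_or_gt n i with h | h
      · rw [hAempty i h]; simp [hnorm]
      · have hins := insertA ⟨i, h⟩
        simp only at hins
        rw [hins, Finset.sum_insert (by simpa using notmem ⟨i, h⟩),
          ih (i + 1) (by omega), sstar_sigma ⟨i, h⟩]
        simp only [← hins]
        ring
  -- total sum
  have htot : ∑ v, sstar v = f univ := by
    have := sumA n 0 (by omega)
    rwa [A0] at this
  -- the constraint inequalities
  have hconstr : ∀ S : Finset V, f S ≤ ∑ v ∈ S, sstar v := by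
    intro S
    have step : ∀ j : Fin n,
        f (S ∩ A (j : ℕ)) - f (S ∩ A ((j : ℕ) + 1)) ≤
          (if σ j ∈ S then sstar (σ j) else 0) := by
      intro j
      by_cases hjS : σ j ∈ S
      · rw [if_pos hjS, sstar_sigma]
        have hsm := hsup (S ∩ A (j : ℕ)) (A ((j : ℕ) + 1))
        have h1 : (S ∩ A (j : ℕ)) ∪ A ((j : ℕ) + 1) = A (j : ℕ) := by
          ext v
          simp only [Finset.mem_union, Finset.mem_inter, memA]
          constructor
          · rintro (⟨-, h⟩ | h)
            · exact h
            · omega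
          · intro h
            rcases eq_or_lt_of_le h with h' | h'
            · left
              refine ⟨?_, h⟩
              have : v = σ j := (hve v j).mpr h'.symm
              rwa [this]
            · right; omega
        have h2 : (S ∩ A (j : ℕ)) ∩ A ((j : ℕ) + 1) = S ∩ A ((j : ℕ) + 1) := by
          ext v
          simp only [Finset.mem_inter, memA]
          constructor
          · rintro ⟨⟨hS, -⟩, h⟩; exact ⟨hS, h⟩
          · rintro ⟨hS, h⟩; exact ⟨⟨hS, by omega⟩, h⟩
        rw [h1, h2] at hsm
        linarith
      · rw [if_neg hjS]
        have : S ∩ A (j : ℕ) = S ∩ A ((j : ℕ) + 1) := by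
          ext v
          simp only [Finset.mem_inter, memA]
          constructor
          · rintro ⟨hS, h⟩
            refine ⟨hS, ?_⟩
            rcases eq_or_lt_of_le h with h' | h'
            · exfalso
              have : v = σ j := (hve v j).mpr h'.symm
              rw [this] at hS; exact hjS hS
            · omega
          · rintro ⟨hS, h⟩; exact ⟨hS, by omega⟩
        rw [this]
        simp
    have tele : ∑ i ∈ Finset.range n,
        (f (S ∩ A i) - f (S ∩ A (i + 1))) = f (S ∩ A 0) - f (S ∩ A n) :=
      Finset.sum_range_sub' (fun i => f (S ∩ A i)) n
    rw [A0, hAempty n le_rfl, Finset.inter_univ, Finset.inter_empty, hnorm, sub_zero] at tele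
    have hfin : ∑ j : Fin n, (f (S ∩ A (j : ℕ)) - f (S ∩ A ((j : ℕ) + 1)))
        = ∑ i ∈ Finset.range n, (f (S ∩ A i) - f (S ∩ A (i + 1))) :=
      Fin.sum_univ_eq_sum_range (fun i => f (S ∩ A i) - f (S ∩ A (i + 1))) n
    have hle : ∑ j : Fin n, (f (S ∩ A (j : ℕ)) - f (S ∩ A ((j : ℕ) + 1)))
        ≤ ∑ j : Fin n, (if σ j ∈ S then sstar (σ j) else 0) :=
      Finset.sum_le_sum fun j _ => step j
    have hre : ∑ j : Fin n, (if σ j ∈ S then sstar (σ j) else 0)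
        = ∑ v ∈ S, sstar v := by
      rw [Equiv.sum_comp σ (fun v => if v ∈ S then sstar v else 0)]
      rw [Finset.sum_ite_mem, Finset.univ_inter]
    rw [hfin, tele] at hle
    rw [hre] at hle
    exact hle
  refine ⟨⟨hnonneg, hconstr, htot⟩, ?_⟩
  -- optimality
  intro x hx0 hxS hxV
  set F : ℕ → ℝ := fun i => f (A i) with hF
  set X : ℕ → ℝ := fun i => ∑ v ∈ A i, x v with hX
  set D : ℕ → ℝ := fun i => X i - F i with hD
  set W : ℕ → ℝ := fun i => if h : i < n then w (σ ⟨i, h⟩) else 0 with hW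
  have hWmono : ∀ i, i + 1 < n → W i ≤ W (i + 1) := by
    intro i hi
    simp only [hW]
    rw [dif_pos (by omega : i < n), dif_pos hi]
    exact hsort ⟨i, by omega⟩ ⟨i + 1, hi⟩ (by simp [Fin.le_def])
  have hDpos : ∀ i, 0 ≤ D i := by
    intro i
    have := hxS (A i)
    simp only [hD, hX, hF]
    linarith
  have hD0 : D 0 = 0 := by
    simp only [hD, hX, hF, A0]
    rw [hxV]
    ring
  have hDn : D n = 0 := by
    simp only [hD, hX, hF, hAempty n le_rfl]
    simp [hnorm]
  have habel := abel_aux n W D hWmono hDpos hD0 hDn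
  have hterm : ∀ j : Fin n, W (j : ℕ) * (D (j : ℕ) - D ((j : ℕ) + 1))
      = w (σ j) * (x (σ j) - sstar (σ j)) := by
    intro j
    have hXstep : X (j : ℕ) - X ((j : ℕ) + 1) = x (σ j) := by
      simp only [hX]
      rw [insertA j, Finset.sum_insert (notmem j)]
      ring
    have hFstep : F (j : ℕ) - F ((j : ℕ) + 1) = sstar (σ j) := by
      rw [sstar_sigma]
    have hWj : W (j : ℕ) = w (σ j) := by
      simp only [hW]
      rw [dif_pos j.isLt]
    rw [hWj]
    have : D (j : ℕ) - D ((j : ℕ) + 1)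
        = (X (j : ℕ) - X ((j : ℕ) + 1)) - (F (j : ℕ) - F ((j : ℕ) + 1)) := by
      simp only [hD]; ring
    rw [this, hXstep, hFstep]
  have hsum : ∑ i ∈ Finset.range n, W i * (D i - D (i + 1))
      = ∑ v, w v * (x v - sstar v) := by
    rw [← Fin.sum_univ_eq_sum_range (fun i => W i * (D i - D (i + 1))) n]
    rw [← Equiv.sum_comp σ (fun v => w v * (x v - sstar v))]
    exact Finset.sum_congr rfl fun j _ => hterm j
  rw [hsum] at habel
  have hexp : ∑ v, w v * (x v - sstar v)
      = ∑ v, x v * w v - ∑ v, sstar v * w v := by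
    rw [← Finset.sum_sub_distrib]
    exact Finset.sum_congr rfl fun v _ => by ring
  rw [hexp] at habel
  linarith
end

section
/- Let G = (V, E) be a finite multigraph and let f(S) = |E(S)| for S ⊆ V, where E(S) is the set of edges with both endpoints in S. Then a vector b ∈ ℝ^V lies in the contrapolymatroid base polytope B_f (i.e., b ≥ 0, b(S) ≥ f(S) for all S ⊆ V, b(V) = |E|) if and only if b is a fractional orientation of G: there exist x_{uv}, x_{vu} ≥ 0 with x_{uv} + x_{vu} = 1 for every edge {u,v} ∈ E such that b_u = Σ_{v : uv ∈ E} x_{uv} for all u. -/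
open Finset

private lemma cnt_submod {V E : Type*} [DecidableEq V] (fst snd : E → V)
    (T : Finset E) (S₁ S₂ : Finset V) :
    (T.filter fun e => fst e ∈ S₁ ∧ snd e ∈ S₁).card
      + (T.filter fun e => fst e ∈ S₂ ∧ snd e ∈ S₂).card
    ≤ (T.filter fun e => fst e ∈ S₁ ∩ S₂ ∧ snd e ∈ S₁ ∩ S₂).card
      + (T.filter fun e => fst e ∈ S₁ ∪ S₂ ∧ snd e ∈ S₁ ∪ S₂).card := by
  classical
  simp only [Finset.card_filter]
  rw [← Finset.sum_add_distrib, ← Finset.sum_add_distrib]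
  refine Finset.sum_le_sum fun e _ => ?_
  by_cases h1 : fst e ∈ S₁ <;> by_cases h2 : snd e ∈ S₁ <;>
    by_cases h3 : fst e ∈ S₂ <;> by_cases h4 : snd e ∈ S₂ <;>
    simp [Finset.mem_inter, Finset.mem_union, h1, h2, h3, h4]

private lemma key {V E : Type*} [Fintype V] [Fintype E] [DecidableEq V]
    (fst snd : E → V) (hloop : ∀ e : E, fst e ≠ snd e) :
    ∀ (n : ℕ) (T : Finset E), T.card = n → ∀ b : V → ℝ,
      (∀ S : Finset V,
        ((T.filter fun e => fst e ∈ S ∧ snd e ∈ S).card : ℝ) ≤ ∑ v ∈ S, b v) →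
      (∑ v, b v = (T.card : ℝ)) →
      ∃ x : E → ℝ, (∀ e ∈ T, 0 ≤ x e ∧ x e ≤ 1) ∧
        ∀ u : V, b u = ∑ e ∈ T, ((if fst e = u then x e else 0) +
          (if snd e = u then 1 - x e else 0)) := by
  classical
  intro n
  induction n with
  | zero =>
    intro T hT b hle hsum
    have hT0 : T = ∅ := Finset.card_eq_zero.mp hT
    subst hT0
    have hnn : ∀ v : V, 0 ≤ b v := by
      intro v
      have := hle {v}
      simpa using this
    have hall : ∀ v ∈ Finset.univ, b v = 0 := by
      rw [← Finset.sum_eq_zero_iff_of_nonneg (fun v _ => hnn v)]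
      simpa using hsum
    refine ⟨0, by simp, fun u => ?_⟩
    simp [hall u (Finset.mem_univ u)]
  | succ n ih =>
    intro T hT b hle hsum
    have hTne : T.Nonempty := Finset.card_pos.mp (by omega)
    obtain ⟨e₀, he₀⟩ := hTne
    set u := fst e₀ with hu
    set v := snd e₀ with hv
    have huv : u ≠ v := hloop e₀
    set T' := T.erase e₀ with hT'
    have hT'card : T'.card = n := by
      rw [hT', Finset.card_erase_of_mem he₀, hT]
      omega
    -- cnt over T' vs T
    have hcnt_le : ∀ S : Finset V,
        (T'.filter fun e => fst e ∈ S ∧ snd e ∈ S).card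
          ≤ (T.filter fun e => fst e ∈ S ∧ snd e ∈ S).card := by
      intro S
      exact Finset.card_le_card (Finset.filter_subset_filter _ (Finset.erase_subset _ _))
    have hcnt_both : ∀ S : Finset V, u ∈ S → v ∈ S →
        (T.filter fun e => fst e ∈ S ∧ snd e ∈ S).card
          = (T'.filter fun e => fst e ∈ S ∧ snd e ∈ S).card + 1 := by
      intro S huS hvS
      have : T = insert e₀ T' := by
        rw [hT', Finset.insert_erase he₀]
      rw [this, Finset.filter_insert, if_pos ⟨huS, hvS⟩,
        Finset.card_insert_of_notMem (fun h => (Finset.notMem_erase e₀ T)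
          (Finset.mem_of_mem_filter _ h))]
    -- the slack function
    set g : Finset V → ℝ := fun S =>
      (∑ w ∈ S, b w) - ((T'.filter fun e => fst e ∈ S ∧ snd e ∈ S).card : ℝ) with hg
    have hg0 : ∀ S : Finset V, 0 ≤ g S := by
      intro S
      have h1 : ((T'.filter fun e => fst e ∈ S ∧ snd e ∈ S).card : ℝ)
          ≤ ((T.filter fun e => fst e ∈ S ∧ snd e ∈ S).card : ℝ) := by
        exact_mod_cast hcnt_le S
      have := hle S
      simp only [hg]
      linarith
    have hg1 : ∀ S : Finset V, u ∈ S → v ∈ S → 1 ≤ g S := by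
      intro S huS hvS
      have h1 := hle S
      rw [hcnt_both S huS hvS] at h1
      push_cast at h1
      simp only [hg]
      linarith
    -- minimizers
    have hne₁ : (Finset.univ.filter fun S : Finset V => u ∈ S ∧ v ∉ S).Nonempty :=
      ⟨{u}, by simp [huv.symm]⟩
    have hne₂ : (Finset.univ.filter fun S : Finset V => v ∈ S ∧ u ∉ S).Nonempty :=
      ⟨{v}, by simp [huv]⟩
    obtain ⟨S₁, hS₁mem, hS₁min⟩ := Finset.exists_min_image _ g hne₁
    obtain ⟨S₂, hS₂mem, hS₂min⟩ := Finset.exists_min_image _ g hne₂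
    simp only [Finset.mem_filter, Finset.mem_univ, true_and] at hS₁mem hS₂mem
    set α := g S₁ with hα
    set β := g S₂ with hβ
    have hα0 : 0 ≤ α := hg0 S₁
    have hβ0 : 0 ≤ β := hg0 S₂
    have hαβ : 1 ≤ α + β := by
      have hsub : ((T'.filter fun e => fst e ∈ S₁ ∧ snd e ∈ S₁).card : ℝ)
          + ((T'.filter fun e => fst e ∈ S₂ ∧ snd e ∈ S₂).card : ℝ)
          ≤ ((T'.filter fun e => fst e ∈ S₁ ∩ S₂ ∧ snd e ∈ S₁ ∩ S₂).card : ℝ)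
          + ((T'.filter fun e => fst e ∈ S₁ ∪ S₂ ∧ snd e ∈ S₁ ∪ S₂).card : ℝ) := by
        exact_mod_cast cnt_submod fst snd T' S₁ S₂
      have hmod : (∑ w ∈ S₁ ∪ S₂, b w) + (∑ w ∈ S₁ ∩ S₂, b w)
          = (∑ w ∈ S₁, b w) + (∑ w ∈ S₂, b w) := Finset.sum_union_inter
      have hUn : 1 ≤ g (S₁ ∪ S₂) :=
        hg1 _ (Finset.mem_union_left _ hS₁mem.1) (Finset.mem_union_right _ hS₂mem.1)
      have hIn : 0 ≤ g (S₁ ∩ S₂) := hg0 _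
      rw [hα, hβ]
      simp only [hg] at hUn hIn ⊢
      linarith
    set t := min α 1 with ht
    have ht0 : 0 ≤ t := le_min hα0 zero_le_one
    have ht1 : t ≤ 1 := min_le_right _ _
    have htα : t ≤ α := min_le_left _ _
    have h1t : 1 - t ≤ β := by
      rcases min_cases α 1 with ⟨h, h'⟩ | ⟨h, h'⟩ <;> rw [ht, h] <;> linarith
    set b' : V → ℝ := fun w =>
      b w - ((if w = u then t else 0) + (if w = v then 1 - t else 0)) with hb'
    have hb'sum : ∀ S : Finset V, ∑ w ∈ S, b' w
        = (∑ w ∈ S, b w) - (if u ∈ S then t else 0) - (if v ∈ S then 1 - t else 0) := by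
      intro S
      simp only [hb']
      rw [Finset.sum_sub_distrib, Finset.sum_add_distrib,
        Finset.sum_ite_eq' S u (fun _ => t), Finset.sum_ite_eq' S v (fun _ => 1 - t)]
      ring
    have hyp1 : ∀ S : Finset V,
        ((T'.filter fun e => fst e ∈ S ∧ snd e ∈ S).card : ℝ) ≤ ∑ w ∈ S, b' w := by
      intro S
      rw [hb'sum]
      by_cases huS : u ∈ S <;> by_cases hvS : v ∈ S
      · have := hle S
        rw [hcnt_both S huS hvS] at this
        push_cast at this
        simp only [if_pos huS, if_pos hvS]
        linarith
      · have := hS₁min S (by simp [huS, hvS])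
        simp only [hg] at this
        simp only [if_pos huS, if_neg hvS]
        linarith [htα]
      · have := hS₂min S (by simp [huS, hvS])
        simp only [hg] at this
        simp only [if_neg huS, if_pos hvS]
        linarith [h1t]
      · have := hg0 S
        simp only [hg] at this
        simp only [if_neg huS, if_neg hvS]
        linarith
    have hyp2 : ∑ w, b' w = (T'.card : ℝ) := by
      rw [hb'sum, hsum, hT, hT'card]
      simp only [Finset.mem_univ, if_pos]
      push_cast
      ring
    obtain ⟨x', hx'1, hx'2⟩ := ih T' hT'card b' hyp1 hyp2
    set x := Function.update x' e₀ t with hx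
    have hxe₀ : x e₀ = t := Function.update_self e₀ t x'
    have hxT' : ∀ e ∈ T', x e = x' e := by
      intro e he
      exact Function.update_of_ne (Finset.ne_of_mem_erase he) t x'
    refine ⟨x, ?_, ?_⟩
    · intro e he
      by_cases h : e = e₀
      · subst h; rw [hxe₀]; exact ⟨ht0, ht1⟩
      · rw [hxT' e (Finset.mem_erase.mpr ⟨h, he⟩)]
        exact hx'1 e (Finset.mem_erase.mpr ⟨h, he⟩)
    · intro w
      have hdecomp : T = insert e₀ T' := by rw [hT', Finset.insert_erase he₀]
      rw [hdecomp, Finset.sum_insert (Finset.notMem_erase e₀ T)]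
      have hrest : ∑ e ∈ T', ((if fst e = w then x e else 0) +
          (if snd e = w then 1 - x e else 0))
          = ∑ e ∈ T', ((if fst e = w then x' e else 0) +
          (if snd e = w then 1 - x' e else 0)) := by
        refine Finset.sum_congr rfl fun e he => ?_
        rw [hxT' e he]
      rw [hrest, ← hx'2 w, hxe₀]
      have hA : (if fst e₀ = w then t else 0) = (if w = u then t else 0) := by
        rw [← hu]; by_cases h : u = w
        · simp [h]
        · simp [h, Ne.symm h]
      have hB : (if snd e₀ = w then 1 - t else 0) = (if w = v then 1 - t else 0) := by
        rw [← hv]; by_cases h : v = w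
        · simp [h]
        · simp [h, Ne.symm h]
      rw [hA, hB]
      simp only [hb']
      ring

/-- For `f(S) = |E(S)|` on a multigraph (edges given by endpoint maps
`fst, snd : E → V`), a vector `b` is in the contrapolymatroid base polytope of
`f` iff `b` is induced by a fractional orientation of the edges. -/
theorem stmt12 {V E : Type*} [Fintype V] [Fintype E] [DecidableEq V]
    (fst snd : E → V) (hloop : ∀ e : E, fst e ≠ snd e) :
    let f : Finset V → ℝ :=
      fun S => ((Finset.univ.filter fun e : E => fst e ∈ S ∧ snd e ∈ S).card : ℝ)
    ∀ b : V → ℝ,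
      ((∀ v : V, 0 ≤ b v) ∧ (∀ S : Finset V, f S ≤ ∑ v ∈ S, b v) ∧
          (∑ v, b v = (Fintype.card E : ℝ))) ↔
        ∃ x : E → ℝ, (∀ e : E, 0 ≤ x e ∧ x e ≤ 1) ∧
          ∀ u : V, b u = ∑ e : E, ((if fst e = u then x e else 0) +
            (if snd e = u then 1 - x e else 0)) := by
  classical
  intro f b
  constructor
  · rintro ⟨hpos, hsup, htot⟩
    obtain ⟨x, hx1, hx2⟩ := key fst snd hloop (Finset.univ.card) Finset.univ rfl b
      (fun S => hsup S) (by rw [htot]; norm_cast)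
    exact ⟨x, fun e => hx1 e (Finset.mem_univ e), hx2⟩
  · rintro ⟨x, hx1, hx2⟩
    have hterm : ∀ (e : E) (w : V),
        0 ≤ (if fst e = w then x e else 0) + (if snd e = w then 1 - x e else 0) := by
      intro e w
      obtain ⟨h0, h1⟩ := hx1 e
      split_ifs <;> linarith
    have hswap : ∀ S : Finset V, ∑ w ∈ S, b w
        = ∑ e : E, ((if fst e ∈ S then x e else 0) + (if snd e ∈ S then 1 - x e else 0)) := by
      intro S
      calc ∑ w ∈ S, b w = ∑ w ∈ S, ∑ e : E, ((if fst e = w then x e else 0) +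
            (if snd e = w then 1 - x e else 0)) := Finset.sum_congr rfl fun w _ => hx2 w
        _ = ∑ e : E, ∑ w ∈ S, ((if fst e = w then x e else 0) +
            (if snd e = w then 1 - x e else 0)) := Finset.sum_comm
        _ = _ := by
          refine Finset.sum_congr rfl fun e _ => ?_
          rw [Finset.sum_add_distrib, Finset.sum_ite_eq S (fst e) (fun _ => x e),
            Finset.sum_ite_eq S (snd e) (fun _ => 1 - x e)]
    refine ⟨fun w => ?_, fun S => ?_, ?_⟩
    · rw [hx2 w]; exact Finset.sum_nonneg fun e _ => hterm e w
    · rw [hswap S]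
      simp only [f, Finset.card_filter]
      push_cast
      refine Finset.sum_le_sum fun e _ => ?_
      obtain ⟨h0, h1⟩ := hx1 e
      by_cases hf : fst e ∈ S <;> by_cases hs : snd e ∈ S <;>
        simp [hf, hs] <;> linarith
    · rw [hswap Finset.univ]
      simp only [Finset.mem_univ, if_pos]
      have hone : ∑ e : E, (x e + (1 - x e)) = ∑ e : E, (1 : ℝ) :=
        Finset.sum_congr rfl fun e _ => by ring
      rw [hone, Finset.sum_const, Finset.card_univ, nsmul_eq_mul, mul_one]
end

section
/- Let G = (V, E) be a finite graph and let w : V → ℝ be vertex weights. Let d̂ be the degree vector output by the weighted-greedy peeling algorithm: repeatedly remove u minimizing w(u) + deg_{G'}(u) from the remaining graph G', recording d̂(u) = deg_{G'}(u) at removal. Then ⟨w, d̂⟩ ≤ min over fractional orientations d of ⟨w, d⟩ + Σ_{u ∈ V} deg_G(u)², where the additive error does not depend on w. -/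
open Finset

/-- The weighted-greedy peeling order produces a degree vector `d̂` whose
weighted cost is within an additive error `Σ_u deg(u)²` (independent of `w`)
of the minimum weighted cost over all fractional orientations. -/
theorem stmt13 {V : Type*} [Fintype V] [DecidableEq V] {n : ℕ}
    (hn : Fintype.card V = n)
    (G : SimpleGraph V) [DecidableRel G.Adj]
    (w : V → ℝ) (σ : Fin n ≃ V) :
    -- `R i` is the set of vertices remaining just before step `i`; `σ i` is peeled at step `i`
    let R : ℕ → Finset V := fun i => (Finset.univ.filter fun j : Fin n => i ≤ (j : ℕ)).image σ
    let degR : ℕ → V → ℕ := fun i v => (G.neighborFinset v ∩ R i).card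
    let dhat : V → ℝ := fun v => (degR (σ.symm v) v : ℝ)
    -- greedy choice: the peeled vertex minimizes `w(u) + deg_{G'}(u)` among remaining vertices
    (∀ i : Fin n, ∀ u ∈ R i,
        w (σ i) + (degR i (σ i) : ℝ) ≤ w u + (degR i u : ℝ)) →
    -- any fractional orientation `x` with induced load vector `d`
    ∀ x : V → V → ℝ,
      (∀ u v : V, G.Adj u v → 0 ≤ x u v ∧ x u v + x v u = 1) →
      ∑ v, w v * dhat v ≤
        ∑ v, w v * (∑ u ∈ G.neighborFinset v, x v u) +
          ∑ v, ((G.degree v : ℝ)) ^ 2 := by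
  intro R degR dhat hg x hx
  -- membership in the remaining set
  have hmemR : ∀ (i : ℕ) (u : V), u ∈ R i ↔ i ≤ (σ.symm u : ℕ) := by
    intro i u
    simp only [R, mem_image, mem_filter, mem_univ, true_and]
    constructor
    · rintro ⟨j, hj, rfl⟩; simpa using hj
    · intro h; exact ⟨σ.symm u, h, σ.apply_symm_apply u⟩
  -- the indicator function
  set I : V → V → ℝ := fun v u => if (σ.symm v : ℕ) ≤ (σ.symm u : ℕ) then 1 else 0 with hI
  -- dhat as a sum of indicators
  have hdhat : ∀ v, dhat v = ∑ u ∈ G.neighborFinset v, I v u := by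
    intro v
    have hset : (G.neighborFinset v ∩ R (σ.symm v)) =
        (G.neighborFinset v).filter (fun u => ((σ.symm v : ℕ) ≤ (σ.symm u : ℕ))) := by
      ext u
      simp only [Finset.mem_inter, Finset.mem_filter, hmemR]
    have : dhat v = ((G.neighborFinset v).filter
        (fun u => ((σ.symm v : ℕ) ≤ (σ.symm u : ℕ)))).card := by
      simp only [dhat, degR, hset]
    rw [this, Finset.card_filter]
    push_cast
    simp [I]
  -- swapping double sums over adjacent pairs
  have swap : ∀ f : V → V → ℝ,
      ∑ v, ∑ u ∈ G.neighborFinset v, f v u = ∑ v, ∑ u ∈ G.neighborFinset v, f u v := by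
    intro f
    have h1 : ∀ g : V → V → ℝ, ∑ v, ∑ u ∈ G.neighborFinset v, g v u
        = ∑ v, ∑ u, if G.Adj v u then g v u else 0 := by
      intro g
      refine Finset.sum_congr rfl fun v _ => ?_
      rw [SimpleGraph.neighborFinset_eq_filter, Finset.sum_filter]
    rw [h1 f, h1 (fun v u => f u v), Finset.sum_comm]
    refine Finset.sum_congr rfl fun v _ => Finset.sum_congr rfl fun u _ => ?_
    exact if_congr (G.adj_comm u v) rfl rfl
  -- greedy key inequality
  have key : ∀ a b : V, G.Adj a b → (σ.symm a : ℕ) ≤ (σ.symm b : ℕ) →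
      w a - w b ≤ (G.degree b : ℝ) := by
    intro a b hab hle
    have hbR : b ∈ R (σ.symm a) := (hmemR _ _).2 hle
    have hgr := hg (σ.symm a) b hbR
    rw [σ.apply_symm_apply] at hgr
    have h1 : (degR (σ.symm a) b : ℝ) ≤ (G.degree b : ℝ) := by
      have : degR (σ.symm a) b ≤ G.degree b := by
        simp only [degR]
        calc (G.neighborFinset b ∩ R (σ.symm a)).card ≤ (G.neighborFinset b).card :=
              Finset.card_le_card Finset.inter_subset_left
          _ = G.degree b := (G.card_neighborFinset_eq_degree b)
      exact_mod_cast this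
    have h0 : (0:ℝ) ≤ (degR (σ.symm a) a : ℕ) := by positivity
    linarith
  -- pointwise bound on symmetrized terms
  have hpt : ∀ v, ∀ u ∈ G.neighborFinset v,
      w v * (I v u - x v u) + w u * (I u v - x u v) ≤ (G.degree u : ℝ) + (G.degree v : ℝ) := by
    intro v u hu
    have hadj : G.Adj v u := by rwa [SimpleGraph.mem_neighborFinset] at hu
    have hne : v ≠ u := hadj.ne
    have hne' : (σ.symm v : ℕ) ≠ (σ.symm u : ℕ) := by
      intro h
      exact hne (by simpa using congrArg σ (Fin.val_injective h))
    obtain ⟨hs0, hst⟩ := hx v u hadj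
    obtain ⟨ht0, -⟩ := hx u v hadj.symm
    have hs1 : x v u ≤ 1 := by linarith
    have htv : x u v = 1 - x v u := by linarith
    have hdu : (0:ℝ) ≤ (G.degree u : ℝ) := by positivity
    have hdv : (0:ℝ) ≤ (G.degree v : ℝ) := by positivity
    by_cases h : (σ.symm v : ℕ) ≤ (σ.symm u : ℕ)
    · have hD := key v u hadj h
      have hIvu : I v u = 1 := if_pos h
      have hIuv : I u v = 0 := if_neg (fun h2 => hne' (le_antisymm h h2))
      rw [hIvu, hIuv, htv]
      have e1 : (w v - w u) * (1 - x v u) ≤ (G.degree u : ℝ) * (1 - x v u) :=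
        mul_le_mul_of_nonneg_right hD (by linarith)
      have e2 : (G.degree u : ℝ) * (1 - x v u) ≤ (G.degree u : ℝ) * 1 :=
        mul_le_mul_of_nonneg_left (by linarith) hdu
      nlinarith [e1, e2]
    · have h' : (σ.symm u : ℕ) ≤ (σ.symm v : ℕ) := le_of_not_ge h
      have hD := key u v hadj.symm h'
      have hIvu : I v u = 0 := if_neg h
      have hIuv : I u v = 1 := if_pos h'
      rw [hIvu, hIuv, htv]
      have e1 : (w u - w v) * (x v u) ≤ (G.degree v : ℝ) * (x v u) :=
        mul_le_mul_of_nonneg_right hD hs0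
      have e2 : (G.degree v : ℝ) * (x v u) ≤ (G.degree v : ℝ) * 1 :=
        mul_le_mul_of_nonneg_left hs1 hdv
      nlinarith [e1, e2]
  -- sums of degrees
  have sum1 : ∑ v, ∑ u ∈ G.neighborFinset v, (G.degree v : ℝ) = ∑ v, (G.degree v : ℝ) ^ 2 := by
    refine Finset.sum_congr rfl fun v _ => ?_
    rw [Finset.sum_const, nsmul_eq_mul, G.card_neighborFinset_eq_degree, sq]
  have sum2 : ∑ v, ∑ u ∈ G.neighborFinset v, (G.degree u : ℝ) = ∑ v, (G.degree v : ℝ) ^ 2 := by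
    rw [swap (fun v u => (G.degree u : ℝ))]
    exact sum1
  -- the difference as a double sum
  have expand : ∑ v, w v * dhat v - ∑ v, w v * (∑ u ∈ G.neighborFinset v, x v u)
      = ∑ v, ∑ u ∈ G.neighborFinset v, w v * (I v u - x v u) := by
    rw [← Finset.sum_sub_distrib]
    refine Finset.sum_congr rfl fun v _ => ?_
    rw [hdhat v, ← mul_sub, ← Finset.sum_sub_distrib, Finset.mul_sum]
  set S := ∑ v, ∑ u ∈ G.neighborFinset v, w v * (I v u - x v u) with hS
  have h3 : ∑ v, ∑ u ∈ G.neighborFinset v, w u * (I u v - x u v) = S :=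
    swap (fun v u => w u * (I u v - x u v))
  have two : ∑ v, ∑ u ∈ G.neighborFinset v,
      (w v * (I v u - x v u) + w u * (I u v - x u v)) = 2 * S := by
    calc ∑ v, ∑ u ∈ G.neighborFinset v,
        (w v * (I v u - x v u) + w u * (I u v - x u v))
        = ∑ v, ((∑ u ∈ G.neighborFinset v, w v * (I v u - x v u))
            + ∑ u ∈ G.neighborFinset v, w u * (I u v - x u v)) :=
          Finset.sum_congr rfl fun v _ => Finset.sum_add_distrib
      _ = (∑ v, ∑ u ∈ G.neighborFinset v, w v * (I v u - x v u))
            + ∑ v, ∑ u ∈ G.neighborFinset v, w u * (I u v - x u v) :=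
          Finset.sum_add_distrib
      _ = S + S := by rw [h3, ← hS]
      _ = 2 * S := by ring
  have hbound : ∑ v, ∑ u ∈ G.neighborFinset v,
      (w v * (I v u - x v u) + w u * (I u v - x u v))
      ≤ ∑ v, ∑ u ∈ G.neighborFinset v, ((G.degree u : ℝ) + (G.degree v : ℝ)) :=
    Finset.sum_le_sum fun v _ => Finset.sum_le_sum fun u hu => hpt v u hu
  have hdegsum : ∑ v, ∑ u ∈ G.neighborFinset v, ((G.degree u : ℝ) + (G.degree v : ℝ))
      = 2 * ∑ v, (G.degree v : ℝ) ^ 2 := by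
    simp_rw [Finset.sum_add_distrib]
    rw [sum1, sum2]; ring
  have hSle : S ≤ ∑ v, (G.degree v : ℝ) ^ 2 := by linarith
  linarith
end

section
/- Consider the set D of fractional-orientation load vectors of a graph G = (V, E) with m edges, and let f(b) = Σ_u b_u². The curvature constant C_f = sup_{x,s ∈ D} 2(s - x)ᵀ(s - x) satisfies 2m ≤ C_f ≤ 2 Σ_{u ∈ V} deg_G(u)². -/
open Finset

/-- `b` is a fractional-orientation load vector of `G`. -/
def IsLoad {V : Type*} [Fintype V] [DecidableEq V] (G : SimpleGraph V)
    [DecidableRel G.Adj] (b : V → ℝ) : Prop :=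
  ∃ x : V → V → ℝ, (∀ u v : V, G.Adj u v → 0 ≤ x u v ∧ x u v + x v u = 1) ∧
    ∀ u : V, b u = ∑ v ∈ G.neighborFinset u, x u v

lemma load_bounds {V : Type*} [Fintype V] [DecidableEq V] (G : SimpleGraph V)
    [DecidableRel G.Adj] {b : V → ℝ} (h : IsLoad G b) (u : V) :
    0 ≤ b u ∧ b u ≤ (G.degree u : ℝ) := by
  obtain ⟨x, hx, hb⟩ := h
  constructor
  · rw [hb]
    exact Finset.sum_nonneg fun v hv =>
      (hx u v (by simpa using hv)).1
  · rw [hb]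
    have : (G.degree u : ℝ) = ∑ _v ∈ G.neighborFinset u, (1 : ℝ) := by
      simp [SimpleGraph.card_neighborFinset_eq_degree]
    rw [this]
    refine Finset.sum_le_sum fun v hv => ?_
    have hadj : G.Adj u v := by simpa using hv
    have h1 := hx u v hadj
    have h2 := (hx v u hadj.symm).1
    linarith [h1.2]

/-- Key induction: there is a bounded edge-sign function supported on `S`
whose load discrepancy has squared norm at least `S.card`. -/
lemma key_exists {V : Type*} [Fintype V] [DecidableEq V] (G : SimpleGraph V)
    [DecidableRel G.Adj] (ε : V → V → ℝ)
    (hε : ∀ u v, G.Adj u v → ε u v = 1 ∨ ε u v = -1)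
    (hanti : ∀ u v, G.Adj u v → ε u v + ε v u = 0)
    (S : Finset (Sym2 V)) :
    S ⊆ G.edgeFinset →
    ∃ c : Sym2 V → ℝ, (∀ e, |c e| ≤ 1) ∧ (∀ e ∉ S, c e = 0) ∧
      (S.card : ℝ) ≤ ∑ u, (∑ v ∈ G.neighborFinset u, ε u v * c (s(u, v))) ^ 2 := by
  induction S using Finset.induction_on with
  | empty =>
    intro _
    exact ⟨fun _ => 0, by simp, by simp, by simp⟩
  | @insert a S haS ih =>
    intro hsub
    obtain ⟨c, hc1, hc0, hcQ⟩ := ih (fun e he => hsub (Finset.mem_insert_of_mem he))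
    have haE : a ∈ G.edgeFinset := hsub (Finset.mem_insert_self a S)
    rw [SimpleGraph.mem_edgeFinset] at haE
    obtain ⟨p, q⟩ := a
    have hadj : G.Adj p q := haE
    have hpq : p ≠ q := hadj.ne
    set N := fun u => G.neighborFinset u with hN
    set L := fun u => ∑ v ∈ N u, ε u v * c (s(u, v)) with hL
    set A := fun u => ∑ v ∈ (N u).filter (fun v => s(u, v) = s(p, q)), ε u v with hA
    -- updated sums
    have hupdate : ∀ (t : ℝ) (u : V),
        (∑ v ∈ N u, ε u v * (Function.update c (s(p, q)) t) (s(u, v)))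
          = L u + t * A u := by
      intro t u
      have : ∀ v, ε u v * (Function.update c (s(p, q)) t) (s(u, v))
          = (if s(u, v) = s(p, q) then ε u v * t else ε u v * c (s(u, v))) := by
        intro v
        rw [Function.update_apply]
        split <;> rfl
      rw [Finset.sum_congr rfl (fun v _ => this v), Finset.sum_ite]
      have hfilter0 : ∀ v ∈ (N u).filter (fun v => s(u, v) = s(p, q)),
          c (s(u, v)) = 0 := by
        intro v hv
        rw [Finset.mem_filter] at hv
        rw [hv.2]
        exact hc0 _ haS
      have hLsplit : L u = ∑ v ∈ (N u).filter (fun v => s(u, v) = s(p, q)),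
            ε u v * c (s(u, v))
          + ∑ v ∈ (N u).filter (fun v => ¬(s(u, v) = s(p, q))),
            ε u v * c (s(u, v)) := by
        rw [hL]
        exact (Finset.sum_filter_add_sum_filter_not _ _ _).symm
      have hz : ∑ v ∈ (N u).filter (fun v => s(u, v) = s(p, q)),
          ε u v * c (s(u, v)) = 0 := by
        apply Finset.sum_eq_zero
        intro v hv
        rw [hfilter0 v hv, mul_zero]
      rw [hLsplit, hz, zero_add]
      simp only [hA]
      rw [← Finset.sum_mul]
      ring
    -- values of A
    have hAp : A p = ε p q := by
      simp only [hA]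
      have heq : (N p).filter (fun v => s(p, v) = s(p, q)) = {q} := by
        ext v
        simp only [Finset.mem_filter, Finset.mem_singleton, hN,
          SimpleGraph.mem_neighborFinset, Sym2.eq_iff]
        constructor
        · rintro ⟨hv, h2⟩
          rcases h2 with h2 | h2
          · tauto
          · exact absurd h2.1 hpq
        · rintro rfl
          exact ⟨hadj, by tauto⟩
      rw [heq, Finset.sum_singleton]
    have hAq : A q = ε q p := by
      simp only [hA]
      have heq : (N q).filter (fun v => s(q, v) = s(p, q)) = {p} := by
        ext v
        simp only [Finset.mem_filter, Finset.mem_singleton, hN,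
          SimpleGraph.mem_neighborFinset, Sym2.eq_iff]
        constructor
        · rintro ⟨hv, h2⟩
          rcases h2 with h2 | h2
          · exact absurd h2.1 (fun hh => hpq hh.symm)
          · tauto
        · rintro rfl
          exact ⟨hadj.symm, by tauto⟩
      rw [heq, Finset.sum_singleton]
    have hA2 : (2 : ℝ) ≤ ∑ u, A u ^ 2 := by
      have hsub2 : ({p, q} : Finset V) ⊆ Finset.univ := Finset.subset_univ _
      have h1 : ∑ u ∈ ({p, q} : Finset V), A u ^ 2 ≤ ∑ u, A u ^ 2 :=
        Finset.sum_le_sum_of_subset_of_nonneg hsub2 (fun i _ _ => sq_nonneg _)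
      have h2 : ∑ u ∈ ({p, q} : Finset V), A u ^ 2 = A p ^ 2 + A q ^ 2 := by
        rw [Finset.sum_pair hpq]
      have h3 : A p ^ 2 = 1 := by
        rcases hε p q hadj with h | h <;> rw [hAp, h] <;> norm_num
      have h4 : A q ^ 2 = 1 := by
        rcases hε q p hadj.symm with h | h <;> rw [hAq, h] <;> norm_num
      rw [h2, h3, h4] at h1
      linarith
    -- expand quadratic
    have hquad : ∀ t : ℝ, ∑ u, (L u + t * A u) ^ 2
        = (∑ u, L u ^ 2) + 2 * t * (∑ u, L u * A u) + t ^ 2 * (∑ u, A u ^ 2) := by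
      intro t
      rw [Finset.mul_sum, Finset.mul_sum, ← Finset.sum_add_distrib, ← Finset.sum_add_distrib]
      apply Finset.sum_congr rfl
      intro u _
      ring
    set B := ∑ u, L u * A u with hB
    have hcard : ((insert (s(p, q)) S).card : ℝ) = (S.card : ℝ) + 1 := by
      rw [Finset.card_insert_of_notMem haS]
      push_cast
      ring
    rcases le_or_gt 0 B with hBpos | hBneg
    · refine ⟨Function.update c (s(p, q)) 1, ?_, ?_, ?_⟩
      · intro e
        rw [Function.update_apply]
        split
        · norm_num
        · exact hc1 e
      · intro e he
        have h1 : e ≠ s(p, q) := by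
          rintro rfl; exact he (Finset.mem_insert_self _ _)
        have h2 : e ∉ S := fun hh => he (Finset.mem_insert_of_mem hh)
        rw [Function.update_apply, if_neg h1]
        exact hc0 e h2
      · rw [Finset.sum_congr rfl (fun u _ => by rw [hupdate 1 u])]
        rw [hquad 1, hcard]
        have : (∑ u, L u ^ 2) = ∑ u, (∑ v ∈ N u, ε u v * c (s(u, v))) ^ 2 := rfl
        nlinarith [hcQ, hA2, hBpos]
    · refine ⟨Function.update c (s(p, q)) (-1), ?_, ?_, ?_⟩
      · intro e
        rw [Function.update_apply]
        split
        · norm_num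
        · exact hc1 e
      · intro e he
        have h1 : e ≠ s(p, q) := by
          rintro rfl; exact he (Finset.mem_insert_self _ _)
        have h2 : e ∉ S := fun hh => he (Finset.mem_insert_of_mem hh)
        rw [Function.update_apply, if_neg h1]
        exact hc0 e h2
      · rw [Finset.sum_congr rfl (fun u _ => by rw [hupdate (-1) u])]
        rw [hquad (-1), hcard]
        nlinarith [hcQ, hA2, hBneg]

/-- For the quadratic `f(b) = Σ b_u²` over fractional-orientation load vectors,
the curvature constant `C_f = sup 2‖s - x‖²` satisfies
`2m ≤ C_f ≤ 2 Σ_u deg(u)²`. -/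
theorem stmt14 {V : Type*} [Fintype V] [DecidableEq V]
    (G : SimpleGraph V) [DecidableRel G.Adj] :
    (∀ b s : V → ℝ, IsLoad G b → IsLoad G s →
      2 * ∑ u, (s u - b u) ^ 2 ≤ 2 * ∑ u, ((G.degree u : ℝ)) ^ 2) ∧
    (∃ b s : V → ℝ, IsLoad G b ∧ IsLoad G s ∧
      2 * (G.edgeFinset.card : ℝ) ≤ 2 * ∑ u, (s u - b u) ^ 2) := by
  constructor
  · intro b s hb hs
    have h : ∀ u, (s u - b u) ^ 2 ≤ ((G.degree u : ℝ)) ^ 2 := by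
      intro u
      obtain ⟨hb1, hb2⟩ := load_bounds G hb u
      obtain ⟨hs1, hs2⟩ := load_bounds G hs u
      apply sq_le_sq' <;> linarith
    have := Finset.sum_le_sum (fun u (_ : u ∈ Finset.univ) => h u)
    linarith
  · -- lower bound
    set f := Fintype.equivFin V with hf
    set ε : V → V → ℝ := fun u v => if f u < f v then 1 else -1 with hε
    have hεval : ∀ u v, G.Adj u v → ε u v = 1 ∨ ε u v = -1 := by
      intro u v _
      by_cases h : f u < f v
      · left; simp [hε, h]
      · right; simp [hε, h]
    have hεanti : ∀ u v, G.Adj u v → ε u v + ε v u = 0 := by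
      intro u v hadj
      have hne : f u ≠ f v := fun h => hadj.ne (f.injective h)
      rcases lt_or_gt_of_ne hne with h | h
      · simp [hε, h, asymm h]
      · simp [hε, h, asymm h]
    obtain ⟨c, hc1, _, hcQ⟩ := key_exists G ε hεval hεanti G.edgeFinset le_rfl
    set xs : V → V → ℝ := fun u v => (1 + ε u v * c (s(u, v))) / 2 with hxs
    set xb : V → V → ℝ := fun u v => (1 - ε u v * c (s(u, v))) / 2 with hxb
    have hbound : ∀ u v, G.Adj u v → |ε u v * c (s(u, v))| ≤ 1 := by
      intro u v hadj
      rw [abs_mul]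
      have h1 : |ε u v| = 1 := by
        rcases hεval u v hadj with h | h <;> rw [h] <;> norm_num
      rw [h1, one_mul]
      exact hc1 _
    have hswap : ∀ u v : V, c (s(u, v)) = c (s(v, u)) := by
      intro u v
      rw [Sym2.eq_swap]
    refine ⟨fun u => ∑ v ∈ G.neighborFinset u, xb u v,
            fun u => ∑ v ∈ G.neighborFinset u, xs u v, ?_, ?_, ?_⟩
    · refine ⟨xb, fun u v hadj => ⟨?_, ?_⟩, fun u => rfl⟩
      · have := abs_le.mp (hbound u v hadj)
        simp only [hxb]
        linarith [this.2]
      · have := hεanti u v hadj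
        simp only [hxb]
        rw [← hswap u v]
        field_simp
        linear_combination (-(c (s(u, v)))) * this
    · refine ⟨xs, fun u v hadj => ⟨?_, ?_⟩, fun u => rfl⟩
      · have := abs_le.mp (hbound u v hadj)
        simp only [hxs]
        linarith [this.1]
      · have := hεanti u v hadj
        simp only [hxs]
        rw [← hswap u v]
        field_simp
        linear_combination (c (s(u, v))) * this
    · have hdiff : ∀ u, (∑ v ∈ G.neighborFinset u, xs u v) - (∑ v ∈ G.neighborFinset u, xb u v)
          = ∑ v ∈ G.neighborFinset u, ε u v * c (s(u, v)) := by
        intro u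
        rw [← Finset.sum_sub_distrib]
        apply Finset.sum_congr rfl
        intro v _
        simp only [hxs, hxb]
        ring
      have : ∑ u, ((∑ v ∈ G.neighborFinset u, xs u v) - (∑ v ∈ G.neighborFinset u, xb u v)) ^ 2
          = ∑ u, (∑ v ∈ G.neighborFinset u, ε u v * c (s(u, v))) ^ 2 := by
        apply Finset.sum_congr rfl
        intro u _
        rw [hdiff u]
      rw [this]
      linarith
end

section
/- Let G = (V, E) be a connected graph and r the rank function of its graphic matroid. The edge weights assigned by the deletion-based dense decomposition of r coincide with Thorup's ideal loads ℓ*: in the first level, the minimal set S₁ ⊆ E minimizing (|E| - |S|)/(r(E) - r(S)) is the complement of the edges crossing the Tutte–Nash-Williams partition P of G, and (r(E) - r(S₁))/(|E| - |S₁|) = 1/τ(G), where τ(G) = min_P |E(P)|/(|P| - 1) over all partitions P of V with at least 2 parts. -/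
open Finset

section Helpers

variable {V : Type*} [Fintype V] [DecidableEq V]

open Classical in
/-- The finset of vertices of a connected component. -/
noncomputable def compFinset (H : SimpleGraph V) (c : H.ConnectedComponent) : Finset V :=
  univ.filter (fun v => H.connectedComponentMk v = c)

open Classical in
lemma mem_compFinset {H : SimpleGraph V} {c : H.ConnectedComponent} {v : V} :
    v ∈ compFinset H c ↔ H.connectedComponentMk v = c := by
  simp [compFinset]

open Classical in
/-- The partition of `V` into connected components of `H`. -/
noncomputable def compPartition (H : SimpleGraph V) : Finset (Finset V) :=
  (univ : Finset H.ConnectedComponent).image (compFinset H)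

open Classical in
lemma compFinset_injective (H : SimpleGraph V) : Function.Injective (compFinset H) := by
  intro c c' h
  obtain ⟨v, hv⟩ := Quot.exists_rep c
  have hv' : H.connectedComponentMk v = c := hv
  have hvc : v ∈ compFinset H c := mem_compFinset.mpr hv'
  rw [h] at hvc
  rw [← hv']
  exact mem_compFinset.mp hvc

open Classical in
lemma compPartition_card (H : SimpleGraph V) :
    (compPartition H).card = Nat.card H.ConnectedComponent := by
  rw [compPartition, card_image_of_injective _ (compFinset_injective H), card_univ,
    Nat.card_eq_fintype_card]

/-- A walk from inside `p` to outside `p` uses an edge leaving `p`. -/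
lemma exit_edge {H : SimpleGraph V} (p : Finset V) :
    ∀ {u v : V}, H.Walk u v → u ∈ p → v ∉ p → ∃ x y, H.Adj x y ∧ x ∈ p ∧ y ∉ p := by
  intro u v w
  induction w with
  | nil => intro h h'; exact absurd h h'
  | @cons a b c hadj w ih =>
    intro hu hv
    by_cases hb : b ∈ p
    · exact ih hb hv
    · exact ⟨a, b, hadj, hu, hb⟩

end Helpers

open Classical in
/-- The first level of the deletion-based dense decomposition of the graphic
matroid rank function coincides with Thorup's ideal loads: the unique minimal
minimizer `S₁` of `(|E|-|S|)/(r(E)-r(S))` is the complement of the edges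
crossing a Tutte–Nash-Williams (strength-minimizing) partition `P`, and the
density `(r(E)-r(S₁))/(|E|-|S₁|)` equals `1/τ(G)`. -/
theorem stmt16 {V : Type*} [Fintype V] [DecidableEq V]
    (G : SimpleGraph V) [DecidableRel G.Adj] (hconn : G.Connected)
    -- the rank function of the graphic matroid: `r(X) = |V| - κ(X)`
    (r : Finset (Sym2 V) → ℝ)
    (hr : ∀ S : Finset (Sym2 V),
      r S = (Fintype.card V : ℝ) -
        (Nat.card (SimpleGraph.fromEdgeSet (↑S : Set (Sym2 V))).ConnectedComponent : ℝ))
    -- partitions of `V` with at least two parts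
    (IsPartition : Finset (Finset V) → Prop)
    (hPart : ∀ P : Finset (Finset V), IsPartition P ↔
      ((∀ p ∈ P, p.Nonempty) ∧ (∀ v : V, ∃ p ∈ P, v ∈ p) ∧
        (∀ p ∈ P, ∀ q ∈ P, p ≠ q → p ∩ q = ∅) ∧ 2 ≤ P.card))
    -- edges crossing a partition
    (cross : Finset (Finset V) → Finset (Sym2 V))
    (hcross : ∀ P : Finset (Finset V),
      cross P = G.edgeFinset.filter fun e => ¬ ∃ p ∈ P, ∀ v : V, v ∈ e → v ∈ p)
    -- `τ` is the minimum partition strength, attained by some partition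
    (τ : ℝ)
    (hτmin : ∀ P : Finset (Finset V), IsPartition P →
      τ ≤ ((cross P).card : ℝ) / ((P.card : ℝ) - 1))
    (hτatt : ∃ P : Finset (Finset V), IsPartition P ∧
      ((cross P).card : ℝ) / ((P.card : ℝ) - 1) = τ)
    -- `S₁` is a minimizer of `(|E|-|S|)/(r(E)-r(S))` over `S ⊆ E` with `r(S) < r(E)` ...
    (S₁ : Finset (Sym2 V)) (hS₁sub : S₁ ⊆ G.edgeFinset)
    (hS₁rank : r S₁ < r G.edgeFinset)
    (hS₁min : ∀ T ⊆ G.edgeFinset, r T < r G.edgeFinset →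
      ((G.edgeFinset.card : ℝ) - S₁.card) / (r G.edgeFinset - r S₁) ≤
        ((G.edgeFinset.card : ℝ) - T.card) / (r G.edgeFinset - r T))
    -- ... and is minimal with respect to inclusion among such minimizers
    (hS₁minimal : ∀ T ⊆ G.edgeFinset, r T < r G.edgeFinset →
      ((G.edgeFinset.card : ℝ) - T.card) / (r G.edgeFinset - r T) =
        ((G.edgeFinset.card : ℝ) - S₁.card) / (r G.edgeFinset - r S₁) →
      T ⊆ S₁ → T = S₁) :
    ∃ P : Finset (Finset V), IsPartition P ∧
      ((cross P).card : ℝ) / ((P.card : ℝ) - 1) = τ ∧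
      S₁ = G.edgeFinset \ cross P ∧
      (r G.edgeFinset - r S₁) / ((G.edgeFinset.card : ℝ) - S₁.card) = 1 / τ := by
  classical
  have hV : Nonempty V := hconn.nonempty
  -- the graph spanned by the full edge set is `G` itself
  have hfromE : SimpleGraph.fromEdgeSet (↑G.edgeFinset : Set (Sym2 V)) = G := by
    rw [SimpleGraph.coe_edgeFinset, SimpleGraph.fromEdgeSet_edgeSet]
  -- number of components of `G` is 1
  have hE1 : Nat.card (SimpleGraph.fromEdgeSet (↑G.edgeFinset : Set (Sym2 V))).ConnectedComponent
      = 1 := by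
    rw [hfromE, Nat.card_eq_one_iff_unique]
    constructor
    · constructor
      intro a b
      obtain ⟨u, hu⟩ := Quot.exists_rep a
      obtain ⟨v, hv⟩ := Quot.exists_rep b
      have hu' : G.connectedComponentMk u = a := hu
      have hv' : G.connectedComponentMk v = b := hv
      rw [← hu', ← hv']
      exact SimpleGraph.ConnectedComponent.eq.mpr (hconn.preconnected u v)
    · exact ⟨G.connectedComponentMk (Classical.choice hV)⟩
  have hrE : r G.edgeFinset = (Fintype.card V : ℝ) - 1 := by
    rw [hr, hE1]; norm_num
  -- generic lower bound on the number of components of a sub-edge-set of a partition complement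
  have keyC : ∀ P : Finset (Finset V), IsPartition P →
      P.card ≤ Nat.card (SimpleGraph.fromEdgeSet
        (↑(G.edgeFinset \ cross P) : Set (Sym2 V))).ConnectedComponent := by
    intro P hP
    obtain ⟨hne, _hcov, hdisj, _⟩ := (hPart P).mp hP
    set T := G.edgeFinset \ cross P with hT
    set H := SimpleGraph.fromEdgeSet (↑T : Set (Sym2 V)) with hH
    have hrep : ∀ p : {x // x ∈ P}, (p : Finset V).Nonempty := fun p => hne p p.2
    set φ : {x // x ∈ P} → H.ConnectedComponent :=
      fun p => H.connectedComponentMk ((hrep p).choose) with hφ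
    have hinj : Function.Injective φ := by
      intro p q h
      by_contra hpq
      have hpq' : (p : Finset V) ≠ (q : Finset V) := by
        intro hcontra; exact hpq (Subtype.ext hcontra)
      have hvp : (hrep p).choose ∈ (p : Finset V) := (hrep p).choose_spec
      have hvq : (hrep q).choose ∈ (q : Finset V) := (hrep q).choose_spec
      have hvqnp : (hrep q).choose ∉ (p : Finset V) := by
        intro hmem
        have : (hrep q).choose ∈ (p : Finset V) ∩ (q : Finset V) := mem_inter.mpr ⟨hmem, hvq⟩
        rw [hdisj p p.2 q q.2 hpq'] at this
        exact absurd this (notMem_empty _)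
      obtain ⟨w⟩ := SimpleGraph.ConnectedComponent.eq.mp h
      obtain ⟨x, y, hadj, hx, hy⟩ := exit_edge (p : Finset V) w hvp hvqnp
      obtain ⟨hmemT, _⟩ := (SimpleGraph.fromEdgeSet_adj _).mp hadj
      have hmemT' : s(x, y) ∈ T := hmemT
      rw [hT, mem_sdiff] at hmemT'
      obtain ⟨hmemE, hnc⟩ := hmemT'
      rw [hcross, mem_filter] at hnc
      push_neg at hnc
      obtain ⟨p', hp', hall⟩ := hnc hmemE
      have hxp' : x ∈ p' := hall x (by simp [Sym2.mem_iff])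
      have hyp' : y ∈ p' := hall y (by simp [Sym2.mem_iff])
      have hpp' : (p : Finset V) = p' := by
        by_contra hne'
        have : x ∈ (p : Finset V) ∩ p' := mem_inter.mpr ⟨hx, hxp'⟩
        rw [hdisj p p.2 p' hp' hne'] at this
        exact absurd this (notMem_empty _)
      rw [← hpp'] at hyp'
      exact hy hyp'
    calc P.card = Fintype.card {x // x ∈ P} := (Fintype.card_coe P).symm
      _ ≤ Fintype.card H.ConnectedComponent := Fintype.card_le_of_injective φ hinj
      _ = Nat.card H.ConnectedComponent := (Nat.card_eq_fintype_card).symm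
  -- the component partition of `S₁`
  set H₁ := SimpleGraph.fromEdgeSet (↑S₁ : Set (Sym2 V)) with hH₁
  set Pstar := compPartition H₁ with hPstar
  set k := Nat.card H₁.ConnectedComponent with hkdef
  have hPcard : Pstar.card = k := compPartition_card H₁
  have hrS : r S₁ = (Fintype.card V : ℝ) - k := hr S₁
  have hgap : r G.edgeFinset - r S₁ = (k : ℝ) - 1 := by
    rw [hrE, hrS]; ring
  have hk2 : 2 ≤ k := by
    have h1 : (1 : ℝ) < (k : ℝ) := by
      rw [hrE, hrS] at hS₁rank; linarith
    exact_mod_cast h1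
  have hkpos : (0 : ℝ) < (k : ℝ) - 1 := by
    have : (2 : ℝ) ≤ (k : ℝ) := by exact_mod_cast hk2
    linarith
  have hSne : S₁ ≠ G.edgeFinset := by
    intro h
    have h1 : k = 1 := by rw [hkdef, hH₁, h]; exact hE1
    omega
  clear_value k
  clear hkdef
  -- `Pstar` is a partition
  have hPstarPart : IsPartition Pstar := by
    rw [hPart]
    refine ⟨?_, ?_, ?_, ?_⟩
    · intro p hp
      obtain ⟨c, _, rfl⟩ := mem_image.mp hp
      obtain ⟨v, hv⟩ := Quot.exists_rep c
      have hv' : H₁.connectedComponentMk v = c := hv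
      exact ⟨v, mem_compFinset.mpr hv'⟩
    · intro v
      exact ⟨compFinset H₁ (H₁.connectedComponentMk v),
        mem_image_of_mem _ (by convert mem_univ _), mem_compFinset.mpr rfl⟩
    · intro p hp q hq hpq
      obtain ⟨c, _, rfl⟩ := mem_image.mp hp
      obtain ⟨c', _, rfl⟩ := mem_image.mp hq
      rw [eq_empty_iff_forall_notMem]
      intro v hv
      rw [mem_inter] at hv
      have h1 := mem_compFinset.mp hv.1
      have h2 := mem_compFinset.mp hv.2
      exact hpq (by rw [← h1, ← h2])
    · rw [hPcard]; exact hk2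
  -- edges of `S₁` do not cross `Pstar`
  have hcrossS : ∀ e ∈ S₁, ∃ p ∈ Pstar, ∀ v : V, v ∈ e → v ∈ p := by
    intro e
    induction e using Sym2.ind with
    | _ a b =>
      intro he
      have hab : a ≠ b := by
        have hmemE : s(a, b) ∈ G.edgeSet := by
          rw [← SimpleGraph.mem_edgeFinset]; exact hS₁sub he
        have := G.not_isDiag_of_mem_edgeSet hmemE
        rwa [Sym2.mk_isDiag_iff] at this
      have hadj : H₁.Adj a b := (SimpleGraph.fromEdgeSet_adj _).mpr ⟨he, hab⟩
      refine ⟨compFinset H₁ (H₁.connectedComponentMk a),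
        mem_image_of_mem _ (by convert mem_univ _), ?_⟩
      intro v hv
      rw [Sym2.mem_iff] at hv
      rcases hv with rfl | rfl
      · exact mem_compFinset.mpr rfl
      · exact mem_compFinset.mpr
          (SimpleGraph.ConnectedComponent.eq.mpr hadj.reachable).symm
  have hcrossPsub : cross Pstar ⊆ G.edgeFinset \ S₁ := by
    intro e he
    rw [hcross, mem_filter] at he
    exact mem_sdiff.mpr ⟨he.1, fun heS => he.2 (hcrossS e heS)⟩
  -- upper bound: density of `S₁` is at most `τ`
  obtain ⟨P₀, hP₀, hP₀τ⟩ := hτatt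
  have hP₀2 : 2 ≤ P₀.card := ((hPart P₀).mp hP₀).2.2.2
  set T₀ := G.edgeFinset \ cross P₀ with hT₀
  set κ₀ := Nat.card (SimpleGraph.fromEdgeSet (↑T₀ : Set (Sym2 V))).ConnectedComponent with hκ₀def
  have hκ₀ge : P₀.card ≤ κ₀ := keyC P₀ hP₀
  have hκ₀2 : 2 ≤ κ₀ := le_trans hP₀2 hκ₀ge
  have hrT₀ : r T₀ = (Fintype.card V : ℝ) - κ₀ := hr T₀
  clear_value κ₀
  clear hκ₀def
  have hT₀rank : r T₀ < r G.edgeFinset := by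
    rw [hrE, hrT₀]
    have : (2 : ℝ) ≤ (κ₀ : ℝ) := by exact_mod_cast hκ₀2
    linarith
  have hcross₀sub : cross P₀ ⊆ G.edgeFinset := by
    rw [hcross]; exact filter_subset _ _
  have hT₀card : (T₀.card : ℝ) = (G.edgeFinset.card : ℝ) - (cross P₀).card := by
    rw [hT₀, card_sdiff_of_subset hcross₀sub]
    have := card_le_card hcross₀sub
    push_cast [Nat.cast_sub this]
    ring
  have hub : ((G.edgeFinset.card : ℝ) - S₁.card) / ((k : ℝ) - 1) ≤ τ := by
    have hmin := hS₁min T₀ sdiff_subset hT₀rank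
    rw [hgap] at hmin
    have hgap₀ : r G.edgeFinset - r T₀ = (κ₀ : ℝ) - 1 := by
      rw [hrE, hrT₀]; ring
    rw [hgap₀, hT₀card] at hmin
    have h2 : ((G.edgeFinset.card : ℝ) - ((G.edgeFinset.card : ℝ) - (cross P₀).card))
        / ((κ₀ : ℝ) - 1) = ((cross P₀).card : ℝ) / ((κ₀ : ℝ) - 1) := by ring_nf
    rw [h2] at hmin
    have h3 : ((cross P₀).card : ℝ) / ((κ₀ : ℝ) - 1) ≤
        ((cross P₀).card : ℝ) / ((P₀.card : ℝ) - 1) := by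
      have h2P : (2 : ℝ) ≤ (P₀.card : ℝ) := by exact_mod_cast hP₀2
      have hle : (P₀.card : ℝ) - 1 ≤ (κ₀ : ℝ) - 1 := by
        have : (P₀.card : ℝ) ≤ (κ₀ : ℝ) := by exact_mod_cast hκ₀ge
        linarith
      exact div_le_div_of_nonneg_left (Nat.cast_nonneg _) (by linarith) hle
    rw [← hP₀τ]
    exact le_trans hmin h3
  -- lower bound: `τ ≤ |cross Pstar| / (k - 1) ≤ density of S₁`
  have hlb : τ ≤ ((cross Pstar).card : ℝ) / ((k : ℝ) - 1) := by
    have := hτmin Pstar hPstarPart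
    rwa [hPcard] at this
  have hsdcard : ((G.edgeFinset \ S₁).card : ℝ) = (G.edgeFinset.card : ℝ) - S₁.card := by
    rw [card_sdiff_of_subset hS₁sub]
    have := card_le_card hS₁sub
    push_cast [Nat.cast_sub this]
    ring
  have hcle : ((cross Pstar).card : ℝ) ≤ (G.edgeFinset.card : ℝ) - S₁.card := by
    rw [← hsdcard]
    exact_mod_cast card_le_card hcrossPsub
  have hτeq : ((G.edgeFinset.card : ℝ) - S₁.card) / ((k : ℝ) - 1) = τ := by
    have h1 : ((cross Pstar).card : ℝ) / ((k : ℝ) - 1) ≤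
        ((G.edgeFinset.card : ℝ) - S₁.card) / ((k : ℝ) - 1) :=
      (div_le_div_iff_of_pos_right hkpos).mpr hcle
    linarith
  have hceq : ((cross Pstar).card : ℝ) = (G.edgeFinset.card : ℝ) - S₁.card := by
    have h1 : τ ≤ ((cross Pstar).card : ℝ) / ((k : ℝ) - 1) := hlb
    rw [← hτeq] at h1
    have h2 := (div_le_div_iff_of_pos_right hkpos).mp h1
    linarith
  -- conclude `S₁ = E \ cross Pstar`
  have hcrosseq : cross Pstar = G.edgeFinset \ S₁ := by
    apply eq_of_subset_of_card_le hcrossPsub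
    have : ((G.edgeFinset \ S₁).card : ℝ) = ((cross Pstar).card : ℝ) := by
      rw [hsdcard, hceq]
    exact_mod_cast le_of_eq this
  have hS₁eq : S₁ = G.edgeFinset \ cross Pstar := by
    rw [hcrosseq, sdiff_sdiff_self_left, inter_eq_right.mpr hS₁sub]
  -- positivity of `m - s`
  have hmspos : (0 : ℝ) < (G.edgeFinset.card : ℝ) - S₁.card := by
    have hlt : S₁.card < G.edgeFinset.card :=
      card_lt_card (lt_of_le_of_ne hS₁sub hSne)
    have : (S₁.card : ℝ) < (G.edgeFinset.card : ℝ) := by exact_mod_cast hlt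
    linarith
  have hτval : τ = ((G.edgeFinset.card : ℝ) - S₁.card) / ((k : ℝ) - 1) := hτeq.symm
  refine ⟨Pstar, hPstarPart, ?_, hS₁eq, ?_⟩
  · rw [hPcard, hceq, hτeq]
  · rw [hgap, hτval, one_div_div]
end

section
/- Let f : 2^V → ℝ≥0 be a monotone submodular function with f(∅) = 0, and let Ŝ₁,...,Ŝ_k with densities λ₁ < ... < λ_k be its deletion-based dense decomposition, and T₁,...,T_{k'} with densities λ̂₁ > ... > λ̂_{k'} be the contraction-based dense decomposition of the supermodular function g(X) = f(V) - f(V \ X). Then k = k', Ŝ_i = T_i for each i, and λ̂_i = 1/λ_i. -/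
open Finset

/-- The deletion-based dense decomposition of a normalized monotone submodular
function `f` coincides with the contraction-based dense decomposition of the
supermodular function `g(X) = f(V) - f(V \ X)`: the number of levels agree,
the parts agree, and the densities are reciprocals of each other. -/
theorem stmt18 {V : Type*} [Fintype V] [DecidableEq V]
    (f : Finset V → ℝ) (hnn : ∀ S : Finset V, 0 ≤ f S)
    (hnorm : f ∅ = 0)
    (hmono : ∀ A B : Finset V, A ⊆ B → f A ≤ f B)
    (hsub : ∀ A B : Finset V, f (A ∪ B) + f (A ∩ B) ≤ f A + f B)
    -- the supermodular function `g(X) = f(V) - f(V \ X)`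
    (g : Finset V → ℝ) (hg : ∀ X : Finset V, g X = f univ - f (univ \ X))
    -- deletion-based decomposition: a chain `V = S 0 ⊋ S 1 ⊋ ⋯ ⊋ S k = ∅`;
    -- `Ŝ_{i+1} = S i \ S (i+1)` with density `lam i`
    (k : ℕ) (S : ℕ → Finset V) (lam : ℕ → ℝ)
    (hS0 : S 0 = univ) (hSk : S k = ∅)
    (hdel : ∀ i < k, S (i+1) ⊂ S i ∧ f (S (i+1)) < f (S i) ∧
      (∀ T ⊆ S i, f T < f (S i) →
        (((S i).card : ℝ) - (S (i+1)).card) / (f (S i) - f (S (i+1))) ≤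
          (((S i).card : ℝ) - T.card) / (f (S i) - f T)) ∧
      (∀ T ⊆ S i, f T < f (S i) →
        (((S i).card : ℝ) - T.card) / (f (S i) - f T) =
          (((S i).card : ℝ) - (S (i+1)).card) / (f (S i) - f (S (i+1))) →
        T ⊆ S (i+1) → T = S (i+1)))
    (hlam : ∀ i < k,
      lam i = (((S i).card : ℝ) - (S (i+1)).card) / (f (S i) - f (S (i+1))))
    -- contraction-based decomposition of `g`: parts `T 0, …, T (k'-1)` with
    -- prefix unions `U i` and densities `lamhat i`
    (k' : ℕ) (T U : ℕ → Finset V) (lamhat : ℕ → ℝ)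
    (hU0 : U 0 = ∅) (hUsucc : ∀ i, U (i+1) = U i ∪ T i) (hUk : U k' = univ)
    (hcon : ∀ i < k', T i ⊆ univ \ U i ∧ (T i).Nonempty ∧
      (g (T i ∪ U i) - g (U i)) / ((T i).card : ℝ) = lamhat i ∧
      (∀ A ⊆ univ \ U i, A.Nonempty →
        (g (A ∪ U i) - g (U i)) / (A.card : ℝ) ≤ lamhat i) ∧
      (∀ A ⊆ univ \ U i, A.Nonempty →
        (g (A ∪ U i) - g (U i)) / (A.card : ℝ) = lamhat i → A ⊆ T i)) :
    k = k' ∧ (∀ i < k, S i \ S (i+1) = T i) ∧ (∀ i < k, lamhat i = 1 / lam i) := by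
  have key : ∀ i, i < k → i < k' → U i = univ \ S i →
      S i \ S (i+1) = T i ∧ lamhat i = 1 / lam i := by
    intro i hik hik' hU
    obtain ⟨hss, hflt, hmin, huniq⟩ := hdel i hik
    obtain ⟨hTsub, hTne, hTdens, hmax, humax⟩ := hcon i hik'
    have hcompl : univ \ U i = S i := by
      rw [hU, sdiff_sdiff_right_self, inf_eq_inter, univ_inter]
    have gdiff : ∀ A : Finset V, g (A ∪ U i) - g (U i) = f (S i) - f (S i \ A) := by
      intro A
      have h2 : univ \ (A ∪ U i) = S i \ A := by
        rw [hU]; ext x; simp only [mem_sdiff, mem_union, mem_univ, true_and]; tauto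
      rw [hg, hg, hcompl, h2]; ring
    have hssub : S (i+1) ⊆ S i := hss.subset
    set A : Finset V := S i \ S (i+1) with hA
    have hAne : A.Nonempty := by
      obtain ⟨x, hx1, hx2⟩ := exists_of_ssubset hss
      exact ⟨x, mem_sdiff.mpr ⟨hx1, hx2⟩⟩
    have hAcard : (A.card : ℝ) = (S i).card - (S (i+1)).card := by
      rw [hA, card_sdiff_of_subset hssub]
      exact_mod_cast Nat.cast_sub (card_le_card hssub)
    have hAcardpos : (0:ℝ) < A.card := by exact_mod_cast card_pos.mpr hAne
    have hfd : (0:ℝ) < f (S i) - f (S (i+1)) := sub_pos.mpr hflt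
    have hSA : S i \ A = S (i+1) := by
      rw [hA, sdiff_sdiff_right_self, inf_eq_inter, inter_eq_right.mpr hssub]
    have hdensA : (g (A ∪ U i) - g (U i)) / (A.card : ℝ)
        = (f (S i) - f (S (i+1))) / (A.card : ℝ) := by
      rw [gdiff, hSA]
    have hdApos : 0 < (f (S i) - f (S (i+1))) / (A.card : ℝ) := div_pos hfd hAcardpos
    have hAle : (f (S i) - f (S (i+1))) / (A.card : ℝ) ≤ lamhat i := by
      have := hmax A (by rw [hcompl]; exact sdiff_subset) hAne
      rwa [hdensA] at this
    have hlamhatpos : 0 < lamhat i := lt_of_lt_of_le hdApos hAle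
    have hTS : T i ⊆ S i := by rw [← hcompl]; exact hTsub
    have hTcardpos : (0:ℝ) < (T i).card := by exact_mod_cast card_pos.mpr hTne
    have hTdens' : (f (S i) - f (S i \ T i)) / ((T i).card : ℝ) = lamhat i := by
      rw [← gdiff]; exact hTdens
    have hfT : f (S i) - f (S i \ T i) = lamhat i * (T i).card :=
      (div_eq_iff (ne_of_gt hTcardpos)).mp hTdens'
    have hfTlt : f (S i \ T i) < f (S i) := by
      nlinarith [mul_pos hlamhatpos hTcardpos]
    have hT'card : ((S i \ T i).card : ℝ) = (S i).card - (T i).card := by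
      rw [card_sdiff_of_subset hTS]
      exact_mod_cast Nat.cast_sub (card_le_card hTS)
    have hR : (((S i).card : ℝ) - ((S i \ T i).card : ℝ)) / (f (S i) - f (S i \ T i))
        = 1 / lamhat i := by
      rw [hT'card, hfT]
      field_simp
      ring
    have hratio := hmin (S i \ T i) sdiff_subset hfTlt
    rw [hR, ← hAcard] at hratio
    -- hratio : A.card / (f (S i) - f (S (i+1))) ≤ 1 / lamhat i
    have hrat2 : 1 / ((f (S i) - f (S (i+1))) / (A.card : ℝ)) ≤ 1 / lamhat i := by
      rwa [one_div_div]
    have hge : lamhat i ≤ (f (S i) - f (S (i+1))) / (A.card : ℝ) := by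
      rw [div_le_div_iff₀ hdApos hlamhatpos] at hrat2
      linarith
    have heq : (f (S i) - f (S (i+1))) / (A.card : ℝ) = lamhat i :=
      le_antisymm hAle hge
    have hAT : A ⊆ T i :=
      humax A (by rw [hcompl]; exact sdiff_subset) hAne (hdensA.trans heq)
    have hT'sub : S i \ T i ⊆ S (i+1) := by
      rw [← hSA]; exact sdiff_subset_sdiff (Finset.Subset.refl _) hAT
    have hrEq : (((S i).card : ℝ) - ((S i \ T i).card : ℝ)) / (f (S i) - f (S i \ T i))
        = (((S i).card : ℝ) - (S (i+1)).card) / (f (S i) - f (S (i+1))) := by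
      rw [hR, ← hAcard, ← heq, one_div_div]
    have hT'eq : S i \ T i = S (i+1) := huniq (S i \ T i) sdiff_subset hfTlt hrEq hT'sub
    constructor
    · rw [hA, ← hT'eq, Finset.sdiff_sdiff_eq_self hTS]
    · rw [hlam i hik, ← hAcard, one_div_div, heq]
  have hUeq : ∀ i, i ≤ k → i ≤ k' → U i = univ \ S i := by
    intro i
    induction i with
    | zero => intro _ _; simp [hU0, hS0]
    | succ n ih =>
      intro h1 h2
      have hn1 : n < k := Nat.lt_of_succ_le h1
      have hn2 : n < k' := Nat.lt_of_succ_le h2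
      have hUn := ih (le_of_lt hn1) (le_of_lt hn2)
      obtain ⟨hTeq, _⟩ := key n hn1 hn2 hUn
      have hsub : S (n+1) ⊆ S n := (hdel n hn1).1.subset
      rw [hUsucc, hUn, ← hTeq]
      ext x
      simp only [mem_union, mem_sdiff, mem_univ, true_and]
      have hx := @hsub x
      tauto
  have hkk : k = k' := by
    rcases lt_trichotomy k k' with h | h | h
    · exfalso
      have hU' := hUeq k le_rfl (le_of_lt h)
      rw [hSk, sdiff_empty] at hU'
      obtain ⟨hTsub, hTne, -⟩ := hcon k h
      rw [hU', sdiff_self] at hTsub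
      exact hTne.ne_empty (subset_empty.mp hTsub)
    · exact h
    · exfalso
      have hU' := hUeq k' (le_of_lt h) le_rfl
      rw [hUk] at hU'
      have hE : S k' = ∅ := by
        apply eq_empty_iff_forall_notMem.mpr
        intro x hx
        have hx2 : x ∈ univ \ S k' := by rw [← hU']; exact mem_univ x
        exact (mem_sdiff.mp hx2).2 hx
      exact (Finset.not_ssubset_empty _) (hE ▸ (hdel k' h).1)
  refine ⟨hkk, ?_, ?_⟩ <;> intro i hik
  · exact (key i hik (hkk ▸ hik) (hUeq i hik.le (hkk ▸ hik.le))).1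
  · exact (key i hik (hkk ▸ hik) (hUeq i hik.le (hkk ▸ hik.le))).2
end

section
/- Let f : 2^V → ℝ≥0 be a normalized monotone supermodular function and w ∈ ℝ^V. Let d̂ be the output of the weighted super-greedy peeling (repeatedly remove u ∈ V' minimizing w(u) + f(V') - f(V' - u), setting d̂(u) = f(V') - f(V' - u)), and let d*_w be the minimizer of ⟨w, d⟩ over the contrapolymatroid base polytope B_f given by Edmonds' greedy algorithm. Then ⟨w, d̂⟩ ≤ ⟨w, d*_w⟩ + n · Σ_{u ∈ V} f(u | V - u)², where n = |V| and f(u | A) = f(A ∪ {u}) - f(A). The additive error does not depend on w. -/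
open Finset

private lemma marg_le_top' {V : Type*} [Fintype V] [DecidableEq V]
    (f : Finset V → ℝ)
    (hsup : ∀ A B : Finset V, f A + f B ≤ f (A ∪ B) + f (A ∩ B))
    {A : Finset V} {u : V} (hu : u ∈ A) :
    f A - f (A \ {u}) ≤ f univ - f (univ \ {u}) := by
  have h := hsup A (univ \ {u})
  have h1 : A ∪ (univ \ {u}) = univ := by
    ext v
    simp only [Finset.mem_union, Finset.mem_sdiff, Finset.mem_univ, Finset.mem_singleton,
      true_and, iff_true]
    rcases eq_or_ne v u with rfl | hv
    · exact Or.inl hu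
    · exact Or.inr hv
  have h2 : A ∩ (univ \ {u}) = A \ {u} := by
    ext v
    simp only [Finset.mem_inter, Finset.mem_sdiff, Finset.mem_univ, Finset.mem_singleton,
      true_and]
  rw [h1, h2] at h
  linarith

private lemma top_sdiff_bound' {V : Type*} [Fintype V] [DecidableEq V]
    (f : Finset V → ℝ)
    (hsup : ∀ A B : Finset V, f A + f B ≤ f (A ∪ B) + f (A ∩ B))
    (S : Finset V) :
    f univ - f (univ \ S) ≤ ∑ u ∈ S, (f univ - f (univ \ {u})) := by
  induction S using Finset.induction_on with
  | empty => simp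
  | @insert a S ha ih =>
    have hmem : a ∈ univ \ S := by simp [ha]
    have key := marg_le_top' f hsup hmem
    have heq : (univ \ S) \ {a} = univ \ insert a S := by
      ext v
      simp only [Finset.mem_sdiff, Finset.mem_univ, Finset.mem_singleton, true_and,
        Finset.mem_insert]
      tauto
    rw [heq] at key
    rw [Finset.sum_insert ha]
    linarith

/-- The weighted super-greedy peeling for a normalized monotone supermodular
function `f` produces a base `d̂` whose weighted cost exceeds the minimum
weighted cost over the contrapolymatroid base polytope by at most
`n · Σ_u f(u | V - u)²`, an additive error independent of `w`. -/
theorem stmt19 {V : Type*} [Fintype V] [DecidableEq V] {n : ℕ}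
    (hn : Fintype.card V = n)
    (f : Finset V → ℝ) (hnorm : f ∅ = 0)
    (hmono : ∀ A B : Finset V, A ⊆ B → f A ≤ f B)
    (hsup : ∀ A B : Finset V, f A + f B ≤ f (A ∪ B) + f (A ∩ B))
    (w : V → ℝ) (σ : Fin n ≃ V) :
    -- `R i` is the set of vertices remaining just before step `i`; `σ i` is peeled at step `i`
    let R : ℕ → Finset V := fun i => (Finset.univ.filter fun j : Fin n => i ≤ (j : ℕ)).image σ
    let marg : ℕ → V → ℝ := fun i u => f (R i) - f (R i \ {u})
    let dhat : V → ℝ := fun v => marg (σ.symm v) v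
    -- greedy choice: the peeled vertex minimizes `w(u) + f(V') - f(V' - u)`
    (∀ i : Fin n, ∀ u ∈ R i, w (σ i) + marg i (σ i) ≤ w u + marg i u) →
    -- comparison with the minimizer over the contrapolymatroid base polytope
    ∀ x : V → ℝ, (∀ v : V, 0 ≤ x v) → (∀ S : Finset V, f S ≤ ∑ v ∈ S, x v) →
      (∑ v, x v = f univ) →
      ∑ v, w v * dhat v ≤ ∑ v, w v * x v +
        (n : ℝ) * ∑ u, (f univ - f (univ \ {u})) ^ 2 := by
  intro R marg dhat hgreedy x hx0 hxS hxV
  classical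
  set c : V → ℝ := fun u => f univ - f (univ \ {u}) with hcdef
  have hc0 : ∀ u, 0 ≤ c u := by
    intro u
    have := hmono (univ \ {u}) univ (Finset.sdiff_subset)
    simp only [hcdef]
    linarith
  have hf0 : ∀ S : Finset V, 0 ≤ f S := by
    intro S
    have := hmono ∅ S (Finset.empty_subset S)
    linarith [hnorm.le, hnorm.ge]
  -- membership description of R
  have hRmem : ∀ (i : ℕ) (v : V), v ∈ R i ↔ i ≤ ((σ.symm v : Fin n) : ℕ) := by
    intro i v
    simp only [R, Finset.mem_image, Finset.mem_filter, Finset.mem_univ, true_and]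
    constructor
    · rintro ⟨j, hj, rfl⟩; simpa using hj
    · intro h; exact ⟨σ.symm v, h, by simp⟩
  have hR0 : R 0 = univ := by
    ext v; simp [hRmem]
  have hRn : R n = ∅ := by
    ext v
    simp only [hRmem, Finset.notMem_empty, iff_false, not_le]
    exact (σ.symm v).isLt
  have hmemRk : ∀ (i k : ℕ) (h : k < n), i ≤ k → σ ⟨k, h⟩ ∈ R i := by
    intro i k h hik
    rw [hRmem]
    simpa using hik
  have hRsucc : ∀ (k : ℕ) (h : k < n), R (k + 1) = R k \ {σ ⟨k, h⟩} := by
    intro k h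
    ext v
    rw [hRmem, Finset.mem_sdiff, hRmem, Finset.mem_singleton]
    have hv : v = σ ⟨k, h⟩ ↔ ((σ.symm v : Fin n) : ℕ) = k := by
      rw [← Equiv.symm_apply_eq, Fin.ext_iff]
    rw [hv]
    omega
  have hsum_split : ∀ (k : ℕ) (h : k < n) (g : V → ℝ),
      ∑ v ∈ R k, g v = g (σ ⟨k, h⟩) + ∑ v ∈ R (k + 1), g v := by
    intro k h g
    rw [hRsucc k h, Finset.sdiff_singleton_eq_erase]
    exact (Finset.add_sum_erase _ g (hmemRk k k h le_rfl)).symm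
  set D : ℕ → ℝ := fun k => (∑ v ∈ R k, x v) - f (R k) with hDdef
  have hD0 : D 0 = 0 := by simp [hDdef, hR0, hxV]
  have hDn : D n = 0 := by simp [hDdef, hRn, hnorm]
  have hDpos : ∀ k, 0 ≤ D k := by
    intro k
    have := hxS (R k)
    simp only [hDdef]
    linarith
  set E : ℝ := ∑ u, c u with hEdef
  have hDE : ∀ k, D k ≤ E := by
    intro k
    have h1 : ∑ v ∈ univ \ R k, x v + ∑ v ∈ R k, x v = ∑ v, x v :=
      Finset.sum_sdiff (Finset.subset_univ _)
    have h2 := hxS (univ \ R k)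
    have h3 : f univ - f (univ \ R k) ≤ ∑ u ∈ R k, c u := by
      simpa [hcdef] using top_sdiff_bound' f hsup (R k)
    have h4 : ∑ u ∈ R k, c u ≤ E := by
      rw [hEdef]
      exact Finset.sum_le_sum_of_subset_of_nonneg (Finset.subset_univ _)
        (fun u _ _ => hc0 u)
    have h5 := hf0 (R k)
    rw [hxV] at h1
    simp only [hDdef]
    linarith
  set Wn : ℕ → ℝ := fun k => if h : k < n then w (σ ⟨k, h⟩) else 0 with hWdef
  set cn : ℕ → ℝ := fun k => if h : k < n then c (σ ⟨k, h⟩) else 0 with hcndef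
  have hcn0 : ∀ k, 0 ≤ cn k := by
    intro k
    simp only [hcndef]
    split
    · exact hc0 _
    · exact le_rfl
  have hstep : ∀ k, k < n → Wn (k - 1) - Wn k ≤ cn k := by
    intro k hk
    rcases Nat.eq_zero_or_pos k with rfl | hkpos
    · simpa using hcn0 0
    · have hk1 : k - 1 < n := by omega
      have hmem : σ ⟨k, hk⟩ ∈ R (k - 1) := hmemRk (k - 1) k hk (by omega)
      have hg := hgreedy ⟨k - 1, hk1⟩ (σ ⟨k, hk⟩) (by simpa using hmem)
      simp only [Fin.val_mk] at hg
      have hm1 : 0 ≤ marg (k - 1) (σ ⟨k - 1, hk1⟩) := by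
        simp only [marg]
        have := hmono (R (k - 1) \ {σ ⟨k - 1, hk1⟩}) (R (k - 1)) Finset.sdiff_subset
        linarith
      have hm2 : marg (k - 1) (σ ⟨k, hk⟩) ≤ c (σ ⟨k, hk⟩) := by
        simp only [marg, hcdef]
        exact marg_le_top' f hsup hmem
      simp only [hWdef, hcndef, dif_pos hk, dif_pos hk1]
      linarith
  have hDstep : ∀ (k : ℕ) (h : k < n),
      D (k + 1) - D k = dhat (σ ⟨k, h⟩) - x (σ ⟨k, h⟩) := by
    intro k h
    have hx' := hsum_split k h x
    have hdh : dhat (σ ⟨k, h⟩) = f (R k) - f (R (k + 1)) := by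
      simp only [dhat, marg, Equiv.symm_apply_apply, Fin.val_mk]
      rw [hRsucc k h]
    simp only [hDdef]
    rw [hdh]
    linarith
  set B : ℕ → ℝ := fun k => ∑ i ∈ Finset.range k, cn i * D i with hBdef
  have key : ∀ k, k ≤ n →
      ∑ i ∈ Finset.range k, Wn i * (D (i + 1) - D i) ≤ Wn (k - 1) * D k + B k := by
    intro k
    induction k with
    | zero => intro _; simp [hBdef, hD0]
    | succ k ih =>
      intro hk1
      have hk : k < n := hk1
      have h1 := ih (le_of_lt hk)
      have hB : B (k + 1) = B k + cn k * D k := by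
        simp only [hBdef, Finset.sum_range_succ]
      have h2 := hstep k hk
      have h3 := hDpos k
      have h4 : Wn (k - 1) * D k ≤ Wn k * D k + cn k * D k := by
        nlinarith [mul_le_mul_of_nonneg_right h2 h3]
      have hsub : k + 1 - 1 = k := by omega
      rw [Finset.sum_range_succ, hsub, hB]
      linarith
  have hBn : B n ≤ E * E := by
    have h2 : B n ≤ ∑ i ∈ Finset.range n, cn i * E := by
      rw [hBdef]
      exact Finset.sum_le_sum fun i _ => mul_le_mul_of_nonneg_left (hDE i) (hcn0 i)
    have h3 : ∑ i ∈ Finset.range n, cn i = E := by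
      rw [← Fin.sum_univ_eq_sum_range, hEdef, ← Equiv.sum_comp σ c]
      refine Finset.sum_congr rfl fun j _ => ?_
      simp only [hcndef, dif_pos j.isLt, Fin.eta]
    calc B n ≤ ∑ i ∈ Finset.range n, cn i * E := h2
      _ = (∑ i ∈ Finset.range n, cn i) * E := by rw [Finset.sum_mul]
      _ = E * E := by rw [h3]
  have hCS : E * E ≤ (n : ℝ) * ∑ u, c u ^ 2 := by
    have h := sq_sum_le_card_mul_sum_sq (s := (univ : Finset V)) (f := c)
    rw [Finset.card_univ, hn] at h
    calc E * E = (∑ u, c u) ^ 2 := by rw [hEdef]; ring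
      _ ≤ (n : ℝ) * ∑ u, c u ^ 2 := by exact_mod_cast h
  have hmain : ∑ v, w v * dhat v - ∑ v, w v * x v
      = ∑ i ∈ Finset.range n, Wn i * (D (i + 1) - D i) := by
    rw [← Finset.sum_sub_distrib, ← Equiv.sum_comp σ (fun v => w v * dhat v - w v * x v),
      ← Fin.sum_univ_eq_sum_range (fun i => Wn i * (D (i + 1) - D i))]
    refine Finset.sum_congr rfl fun j _ => ?_
    have h := hDstep j j.isLt
    simp only [Fin.eta] at h
    simp only [hWdef, dif_pos j.isLt, Fin.eta, h]
    ring
  have hkey := key n le_rfl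
  rw [hDn, mul_zero, zero_add] at hkey
  have hsq : ∑ u, c u ^ 2 = ∑ u, (f univ - f (univ \ {u})) ^ 2 := by
    simp only [hcdef]
  rw [← hsq]
  linarith [hmain ▸ hkey]
end
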